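/- arXiv:2407.18104 — 10 statements merged into one kernel-verified Lean document; each statement's English description precedes it below -/
import Mathlib

section
/- Let K be a field and let a, b, c, d ∈ K. If there exists a nonzero homogeneous polynomial L of degree 1 in MvPolynomial (Fin 3) K that divides the polynomial a•x²y + b•y²z + c•z²x + d•xyz, then a*b*c = 0. -/
open MvPolynomial

lemma deg3 (d : Fin 3 →₀ ℕ) : d.degree = d 0 + d 1 + d 2 := by
  rw [Finsupp.degree_apply, Finset.sum_subset (Finset.subset_univ d.support)
    (fun i _ hi => Finsupp.notMem_support_iff.mp hi), Fin.sum_univ_three]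

lemma linear_rep {K : Type*} [CommRing K] (L : MvPolynomial (Fin 3) K)
    (hL : L.IsHomogeneous 1) :
    L = C (coeff (Finsupp.single 0 1) L) * X 0 + C (coeff (Finsupp.single 1 1) L) * X 1 +
        C (coeff (Finsupp.single 2 1) L) * X 2 := by
  ext d
  simp only [coeff_add, coeff_C_mul, coeff_X']
  by_cases hd : d 0 + d 1 + d 2 = 1
  · have h1 : d 0 = 1 ∧ d 1 = 0 ∧ d 2 = 0 ∨ d 0 = 0 ∧ d 1 = 1 ∧ d 2 = 0 ∨
        d 0 = 0 ∧ d 1 = 0 ∧ d 2 = 1 := by omega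
    rcases h1 with ⟨h0, h1, h2⟩ | ⟨h0, h1, h2⟩ | ⟨h0, h1, h2⟩
    · have hde : d = Finsupp.single (0 : Fin 3) 1 := Finsupp.ext fun j => by
        fin_cases j <;> simp [Finsupp.single_apply, h0, h1, h2]
      subst hde; simp [Finsupp.single_eq_single_iff]
    · have hde : d = Finsupp.single (1 : Fin 3) 1 := Finsupp.ext fun j => by
        fin_cases j <;> simp [Finsupp.single_apply, h0, h1, h2]
      subst hde; simp [Finsupp.single_eq_single_iff]
    · have hde : d = Finsupp.single (2 : Fin 3) 1 := Finsupp.ext fun j => by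
        fin_cases j <;> simp [Finsupp.single_apply, h0, h1, h2]
      subst hde; simp [Finsupp.single_eq_single_iff]
  · have hz : coeff d L = 0 := hL.coeff_eq_zero (by rw [deg3]; omega)
    rw [hz]
    have hne : ∀ i : Fin 3, Finsupp.single i 1 ≠ d := by
      intro i h
      apply hd
      rw [← h]
      fin_cases i <;> simp [Finsupp.single_apply]
    simp [hne 0, hne 1, hne 2]

theorem stmt_1 (K : Type*) [Field K] (a b c d : K)
    (h : ∃ L : MvPolynomial (Fin 3) K, L ≠ 0 ∧ L.IsHomogeneous 1 ∧
      L ∣ (a • (X 0 ^ 2 * X 1) + b • (X 1 ^ 2 * X 2) +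
            c • (X 2 ^ 2 * X 0) + d • (X 0 * X 1 * X 2))) :
    a * b * c = 0 := by
  by_contra habc
  have ha : a ≠ 0 := fun h0 => habc (by rw [h0]; ring)
  have hb : b ≠ 0 := fun h0 => habc (by rw [h0]; ring)
  have hc : c ≠ 0 := fun h0 => habc (by rw [h0]; ring)
  obtain ⟨L, hL0, hhom, Q, hQ⟩ := h
  set α := coeff (Finsupp.single 0 1) L with hαdef
  set β := coeff (Finsupp.single 1 1) L with hβdef
  set γ := coeff (Finsupp.single 2 1) L with hγdef
  have hrep := linear_rep L hhom
  rw [← hαdef, ← hβdef, ← hγdef] at hrep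
  have key : ∀ v : Fin 3 → Polynomial K,
      Polynomial.C α * v 0 + Polynomial.C β * v 1 + Polynomial.C γ * v 2 = 0 →
      Polynomial.C a * (v 0 ^ 2 * v 1) + Polynomial.C b * (v 1 ^ 2 * v 2) +
        Polynomial.C c * (v 2 ^ 2 * v 0) + Polynomial.C d * (v 0 * v 1 * v 2) = 0 := by
    intro v hv
    have h1 : aeval v L = 0 := by
      rw [hrep]; simpa [Polynomial.algebraMap_eq] using hv
    have h2 : (aeval v) ((a • (X 0 ^ 2 * X 1) + b • (X 1 ^ 2 * X 2) +
        c • (X 2 ^ 2 * X 0) + d • (X 0 * X 1 * X 2) : MvPolynomial (Fin 3) K)) = 0 := by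
      rw [hQ, map_mul, h1, zero_mul]
    simpa [Algebra.smul_def, Polynomial.algebraMap_eq] using h2
  by_cases hγ : γ = 0
  · by_cases hβ : β = 0
    · -- L = C α * X 0 ; evaluate at (0, X, X)
      have hA := key ![0, Polynomial.X, Polynomial.X] (by simp [hβ, hγ])
      simp at hA
      exact hb (by simpa [pow_succ] using hA)
    · -- γ = 0, β ≠ 0 : evaluate at (C β * X, C (-α) * X, X^2)
      have hA := key ![Polynomial.C β * Polynomial.X, Polynomial.C (-α) * Polynomial.X,
          Polynomial.X ^ 2] (by
        simp only [Matrix.cons_val_zero, Matrix.cons_val_one, Matrix.head_cons, hγ,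
          Matrix.cons_val_two, Matrix.tail_cons]
        rw [← mul_assoc, ← mul_assoc, ← Polynomial.C_mul, ← Polynomial.C_mul, ← add_mul,
          ← Polynomial.C_add]
        simp [mul_comm])
      simp only [Matrix.cons_val_zero, Matrix.cons_val_one, Matrix.head_cons,
        Matrix.cons_val_two, Matrix.tail_cons] at hA
      ring_nf at hA
      simp only [mul_assoc, mul_comm, mul_left_comm, ← Polynomial.C_mul,
        ← Polynomial.C_pow] at hA
      have h5 := congrArg (fun p => p.coeff 5) hA
      simp only [Polynomial.coeff_add, Polynomial.coeff_mul_C, Polynomial.coeff_X_pow,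
        Polynomial.coeff_zero] at h5
      norm_num at h5
      rcases h5 with h5 | h5
      · exact hc h5
      · exact hβ h5
  · -- γ ≠ 0
    have hα0 : α = 0 := by
      have hA := key ![Polynomial.C γ * Polynomial.X, 0, Polynomial.C (-α) * Polynomial.X] (by
        simp only [Matrix.cons_val_zero, Matrix.cons_val_one, Matrix.head_cons,
          Matrix.cons_val_two, Matrix.tail_cons, mul_zero, add_zero]
        rw [← mul_assoc, ← mul_assoc, ← Polynomial.C_mul, ← Polynomial.C_mul, ← add_mul,
          ← Polynomial.C_add]
        simp [mul_comm])
      simp only [Matrix.cons_val_zero, Matrix.cons_val_one, Matrix.head_cons,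
        Matrix.cons_val_two, Matrix.tail_cons, mul_zero, zero_mul, zero_pow, ne_eq,
        OfNat.ofNat_ne_zero, not_false_eq_true, add_zero, zero_add, mul_one] at hA
      ring_nf at hA
      simp only [mul_assoc, mul_comm, mul_left_comm, ← Polynomial.C_mul,
        ← Polynomial.C_pow] at hA
      have h3 := congrArg (fun p => p.coeff 3) hA
      simp only [Polynomial.coeff_add, Polynomial.coeff_mul_C, Polynomial.coeff_X_pow,
        Polynomial.coeff_zero] at h3
      norm_num at h3
      rcases h3 with h3 | h3 | h3
      · exact absurd h3 hc
      · exact h3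
      · exact absurd h3 hγ
    have hβ0 : β = 0 := by
      have hA := key ![0, Polynomial.C γ * Polynomial.X, Polynomial.C (-β) * Polynomial.X] (by
        simp only [Matrix.cons_val_zero, Matrix.cons_val_one, Matrix.head_cons,
          Matrix.cons_val_two, Matrix.tail_cons, mul_zero, add_zero, zero_add]
        rw [← mul_assoc, ← mul_assoc, ← Polynomial.C_mul, ← Polynomial.C_mul, ← add_mul,
          ← Polynomial.C_add]
        simp [mul_comm])
      simp only [Matrix.cons_val_zero, Matrix.cons_val_one, Matrix.head_cons,
        Matrix.cons_val_two, Matrix.tail_cons, mul_zero, zero_mul, zero_pow, ne_eq,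
        OfNat.ofNat_ne_zero, not_false_eq_true, add_zero, zero_add, mul_one] at hA
      ring_nf at hA
      simp only [mul_assoc, mul_comm, mul_left_comm, ← Polynomial.C_mul,
        ← Polynomial.C_pow] at hA
      have h3 := congrArg (fun p => p.coeff 3) hA
      simp only [Polynomial.coeff_add, Polynomial.coeff_mul_C, Polynomial.coeff_X_pow,
        Polynomial.coeff_zero] at h3
      norm_num at h3
      rcases h3 with h3 | h3 | h3
      · exact absurd h3 hb
      · exact h3
      · exact absurd h3 hγ
    have hA := key ![Polynomial.X, Polynomial.X, 0] (by simp [hα0, hβ0])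
    simp at hA
    exact ha (by simpa [pow_succ] using hA)
end

section
/- Let K be an algebraically closed field and let a, b, c, d ∈ K be such that the polynomial P = a•x²y + b•y²z + c•z²x + d•xyz in MvPolynomial (Fin 3) K is nonzero. If P is not irreducible in MvPolynomial (Fin 3) K, then a*b*c = 0. -/
open MvPolynomial

lemma aux_prime_X (K : Type*) [Field K] (i : Fin 2) :
    Prime (X i : MvPolynomial (Fin 2) K) := by
  have h0 : Prime (X 0 : MvPolynomial (Fin 2) K) := by
    rw [← MulEquiv.prime_iff (finSuccEquiv K 1).toMulEquiv]
    simpa [finSuccEquiv_X_zero] using Polynomial.prime_X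
  have := (MulEquiv.prime_iff (renameEquiv K (Equiv.swap (0 : Fin 2) i)).toMulEquiv).mpr h0
  simpa using this

lemma aux_not_dvd (K : Type*) [Field K] (i j : Fin 2) (hij : j ≠ i) {r : K} (hr : r ≠ 0)
    (m : ℕ) : ¬ (X i : MvPolynomial (Fin 2) K) ∣ C r * X j ^ m := by
  rintro ⟨s, hs⟩
  have := congrArg (aeval (fun k : Fin 2 => if k = i then 0 else X k) :
      MvPolynomial (Fin 2) K →ₐ[K] MvPolynomial (Fin 2) K) hs
  simp [hij, algebraMap_eq] at this
  exact hr this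

theorem stmt_2 (K : Type*) [Field K] [IsAlgClosed K] (a b c d : K)
    (hP : (a • (X 0 ^ 2 * X 1) + b • (X 1 ^ 2 * X 2) +
            c • (X 2 ^ 2 * X 0) + d • (X 0 * X 1 * X 2) : MvPolynomial (Fin 3) K) ≠ 0)
    (hirr : ¬ Irreducible (a • (X 0 ^ 2 * X 1) + b • (X 1 ^ 2 * X 2) +
            c • (X 2 ^ 2 * X 0) + d • (X 0 * X 1 * X 2) : MvPolynomial (Fin 3) K)) :
    a * b * c = 0 := by
  by_contra habc
  have ha : a ≠ 0 := fun h => habc (by simp [h])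
  have hb : b ≠ 0 := fun h => habc (by simp [h])
  have hc : c ≠ 0 := fun h => habc (by simp [h])
  apply hirr
  set P : MvPolynomial (Fin 3) K := a • (X 0 ^ 2 * X 1) + b • (X 1 ^ 2 * X 2) +
            c • (X 2 ^ 2 * X 0) + d • (X 0 * X 1 * X 2) with hPdef
  rw [← MulEquiv.irreducible_iff (finSuccEquiv K 2).toMulEquiv]
  set p2 : MvPolynomial (Fin 2) K := C a * X 0 with hp2
  set p1 : MvPolynomial (Fin 2) K := C c * X 1 ^ 2 + C d * (X 0 * X 1) with hp1
  set p0 : MvPolynomial (Fin 2) K := C b * (X 0 ^ 2 * X 1) with hp0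
  have key : (finSuccEquiv K 2) P =
      Polynomial.C p2 * Polynomial.X ^ 2 + Polynomial.C p1 * Polynomial.X +
        Polynomial.C p0 := by
    have e1 : (X 1 : MvPolynomial (Fin 3) K) = X (Fin.succ 0) := rfl
    have e2 : (X 2 : MvPolynomial (Fin 3) K) = X (Fin.succ 1) := rfl
    have eC : ∀ r : K, finSuccEquiv K 2 (C r) = Polynomial.C (C r) := fun r => by
      simp [finSuccEquiv_apply]
    rw [hPdef, e1, e2]
    simp only [smul_eq_C_mul, map_add, map_mul, map_pow, eC, finSuccEquiv_X_zero,
      finSuccEquiv_X_succ, hp2, hp1, hp0]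
    ring
  show Irreducible ((finSuccEquiv K 2) P)
  rw [key]
  set f : Polynomial (MvPolynomial (Fin 2) K) :=
    Polynomial.C p2 * Polynomial.X ^ 2 + Polynomial.C p1 * Polynomial.X + Polynomial.C p0
    with hf
  have hZ : Prime (X 1 : MvPolynomial (Fin 2) K) := aux_prime_X K 1
  have hY : Prime (X 0 : MvPolynomial (Fin 2) K) := aux_prime_X K 0
  have hp2ne : p2 ≠ 0 := mul_ne_zero (fun h => ha (by simpa using h)) (X_ne_zero 0)
  have hdeg : f.natDegree = 2 := Polynomial.natDegree_quadratic hp2ne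
  have hc0 : f.coeff 0 = p0 := by simp [hf]
  have hc1 : f.coeff 1 = p1 := by simp [hf]
  have hc2 : f.coeff 2 = p2 := by simp [hf, Polynomial.coeff_X]
  have heis : f.IsEisensteinAt (Ideal.span {(X 1 : MvPolynomial (Fin 2) K)}) := by
    constructor
    · rw [Polynomial.leadingCoeff, hdeg, hc2, Ideal.mem_span_singleton]
      exact aux_not_dvd K 1 0 (by decide) ha 1 ∘ (by simpa [hp2] using ·)
    · intro n hn
      rw [hdeg] at hn
      interval_cases n
      · rw [hc0, Ideal.mem_span_singleton]
        exact ⟨C b * X 0 ^ 2, by rw [hp0]; ring⟩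
      · rw [hc1, Ideal.mem_span_singleton]
        exact ⟨C c * X 1 + C d * X 0, by rw [hp1]; ring⟩
    · rw [hc0, Ideal.span_singleton_pow, Ideal.mem_span_singleton]
      rintro ⟨s, hs⟩
      rw [hp0] at hs
      have h1 : (X 1 : MvPolynomial (Fin 2) K) * (C b * X 0 ^ 2) = X 1 * (X 1 * s) := by
        linear_combination hs
      have h2 : (C b * X 0 ^ 2 : MvPolynomial (Fin 2) K) = X 1 * s :=
        mul_left_cancel₀ (X_ne_zero 1) h1
      exact aux_not_dvd K 1 0 (by decide) hb 2 ⟨s, h2⟩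
  have hprim : f.IsPrimitive := by
    intro r hr
    by_contra hru
    have hrc : ∀ i, r ∣ f.coeff i := (Polynomial.C_dvd_iff_dvd_coeff r f).mp hr
    have hr2 : r ∣ p2 := hc2 ▸ hrc 2
    have hr1 : r ∣ p1 := hc1 ▸ hrc 1
    have hr0 : r ≠ 0 := fun h => hp2ne (by simpa [h] using hr2)
    obtain ⟨p, hpirr, hpr⟩ := WfDvdMonoid.exists_irreducible_factor hru hr0
    have hp : Prime p := (UniqueFactorizationMonoid.irreducible_iff_prime).mp hpirr
    have hpp2 : p ∣ C a * X 0 := hp2 ▸ hpr.trans hr2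
    have hpX : p ∣ X 0 := by
      rcases hp.dvd_mul.mp hpp2 with h | h
      · exact (hp.not_unit (isUnit_of_dvd_unit h ((isUnit_iff_ne_zero.mpr ha).map C))).elim
      · exact h
    have hXp : (X 0 : MvPolynomial (Fin 2) K) ∣ p := by
      obtain ⟨t, ht⟩ := hpX
      rcases hY.irreducible.isUnit_or_isUnit ht with h | h
      · exact absurd h hp.not_unit
      · obtain ⟨u, hu⟩ := h
        exact ⟨↑u⁻¹, by rw [ht, ← hu]; simp [mul_assoc]⟩
    have hX1 : (X 0 : MvPolynomial (Fin 2) K) ∣ p1 := hXp.trans (hpr.trans hr1)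
    have hXc : (X 0 : MvPolynomial (Fin 2) K) ∣ C c * X 1 ^ 2 := by
      have hd : (X 0 : MvPolynomial (Fin 2) K) ∣ C d * (X 0 * X 1) := ⟨C d * X 1, by ring⟩
      have := dvd_sub hX1 hd
      simpa [hp1] using this
    exact aux_not_dvd K 0 1 (by decide) hc 2 hXc
  exact heis.irreducible ((Ideal.span_singleton_prime hZ.ne_zero).mpr hZ) hprim
    (by rw [hdeg]; norm_num)
end

section
/- Let φ : L →+* L be the ring homomorphism given by t ↦ t^q (the q-power Frobenius of L). Then MvPolynomial.map φ F = G, MvPolynomial.map φ G = H, MvPolynomial.map φ H = F, and MvPolynomial.map φ T = T. -/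
open MvPolynomial

/-- The linear form x' = α•x + α^q•y + α^(q²)•z. -/
noncomputable def xLin (L : Type*) [CommRing L] (q : ℕ) (α : L) : MvPolynomial (Fin 3) L :=
  α • X 0 + α ^ q • X 1 + α ^ q ^ 2 • X 2

/-- The linear form y' = α^q•x + α^(q²)•y + α•z. -/
noncomputable def yLin (L : Type*) [CommRing L] (q : ℕ) (α : L) : MvPolynomial (Fin 3) L :=
  α ^ q • X 0 + α ^ q ^ 2 • X 1 + α • X 2

/-- The linear form z' = α^(q²)•x + α•y + α^q•z. -/
noncomputable def zLin (L : Type*) [CommRing L] (q : ℕ) (α : L) : MvPolynomial (Fin 3) L :=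
  α ^ q ^ 2 • X 0 + α • X 1 + α ^ q • X 2

/-- F = x'² * y'. -/
noncomputable def Fcub (L : Type*) [CommRing L] (q : ℕ) (α : L) : MvPolynomial (Fin 3) L :=
  xLin L q α ^ 2 * yLin L q α

/-- G = y'² * z'. -/
noncomputable def Gcub (L : Type*) [CommRing L] (q : ℕ) (α : L) : MvPolynomial (Fin 3) L :=
  yLin L q α ^ 2 * zLin L q α

/-- H = z'² * x'. -/
noncomputable def Hcub (L : Type*) [CommRing L] (q : ℕ) (α : L) : MvPolynomial (Fin 3) L :=
  zLin L q α ^ 2 * xLin L q α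

/-- T = x' * y' * z'. -/
noncomputable def Tcub (L : Type*) [CommRing L] (q : ℕ) (α : L) : MvPolynomial (Fin 3) L :=
  xLin L q α * yLin L q α * zLin L q α

theorem stmt_4 (K L : Type*) [Field K] [Fintype K] [Field L] [Fintype L] [Algebra K L]
    (hrank : Module.finrank K L = 3) (α : L)
    (φ : L →+* L) (hφ : ∀ t : L, φ t = t ^ Fintype.card K) :
    MvPolynomial.map φ (Fcub L (Fintype.card K) α) = Gcub L (Fintype.card K) α ∧
    MvPolynomial.map φ (Gcub L (Fintype.card K) α) = Hcub L (Fintype.card K) α ∧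
    MvPolynomial.map φ (Hcub L (Fintype.card K) α) = Fcub L (Fintype.card K) α ∧
    MvPolynomial.map φ (Tcub L (Fintype.card K) α) = Tcub L (Fintype.card K) α := by
  set q := Fintype.card K with hq
  have hcube : ∀ t : L, t ^ q ^ 3 = t := by
    intro t
    have h1 : Fintype.card L = q ^ 3 := by
      rw [Module.card_eq_pow_finrank (K := K) (V := L), hrank]
    rw [← h1, FiniteField.pow_card]
  have hx : MvPolynomial.map φ (xLin L q α) = yLin L q α := by
    simp only [xLin, yLin, smul_eq_C_mul, map_add, map_mul, map_C, map_X, hφ,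
      ← pow_mul]
    rw [show q ^ 2 * q = q ^ 3 by ring, hcube, show q * q = q ^ 2 by ring]
  have hy : MvPolynomial.map φ (yLin L q α) = zLin L q α := by
    simp only [yLin, zLin, smul_eq_C_mul, map_add, map_mul, map_C, map_X, hφ,
      ← pow_mul]
    rw [show q ^ 2 * q = q ^ 3 by ring, hcube, show q * q = q ^ 2 by ring]
  have hz : MvPolynomial.map φ (zLin L q α) = xLin L q α := by
    simp only [zLin, xLin, smul_eq_C_mul, map_add, map_mul, map_C, map_X, hφ,
      ← pow_mul]
    rw [show q ^ 2 * q = q ^ 3 by ring, hcube, show q * q = q ^ 2 by ring]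
  refine ⟨?_, ?_, ?_, ?_⟩ <;>
    simp [Fcub, Gcub, Hcub, Tcub, map_mul, map_pow, hx, hy, hz] <;> ring
end

section
/- The polynomial T = x' * y' * z' lies in the range of MvPolynomial.map (algebraMap K L); that is, there exists T₀ ∈ MvPolynomial (Fin 3) K with MvPolynomial.map (algebraMap K L) T₀ = T. -/
open MvPolynomial

open Polynomial in
lemma fixed_mem_range_aux (K L : Type*) [Field K] [Fintype K] [Field L] [Fintype L]
    [Algebra K L] (a : L) (h : a ^ Fintype.card K = a) :
    ∃ k : K, algebraMap K L k = a := by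
  classical
  set q := Fintype.card K with hq
  have hq1 : 1 < q := Fintype.one_lt_card
  have hne : (Polynomial.X ^ q - Polynomial.X : L[X]) ≠ 0 :=
    FiniteField.X_pow_card_sub_X_ne_zero L hq1
  set S : Finset L := (Polynomial.X ^ q - Polynomial.X : L[X]).roots.toFinset with hS
  have hcardS : S.card ≤ q := by
    calc S.card ≤ (Polynomial.X ^ q - Polynomial.X : L[X]).roots.card :=
          Multiset.toFinset_card_le _
      _ ≤ (Polynomial.X ^ q - Polynomial.X : L[X]).natDegree := Polynomial.card_roots' _
      _ = q := FiniteField.X_pow_card_sub_X_natDegree_eq L hq1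
  set img : Finset L := Finset.univ.image (algebraMap K L) with himg
  have hsub : img ⊆ S := by
    intro b hb
    simp only [himg, Finset.mem_image] at hb
    obtain ⟨k, -, rfl⟩ := hb
    simp only [hS, Multiset.mem_toFinset, Polynomial.mem_roots hne, Polynomial.IsRoot,
      Polynomial.eval_sub, Polynomial.eval_pow, Polynomial.eval_X]
    rw [← map_pow, FiniteField.pow_card, sub_self]
  have hcardimg : img.card = q :=
    Finset.card_image_of_injective _ (algebraMap K L).injective |>.trans (by simp [hq])
  have heq : S = img := (Finset.eq_of_subset_of_card_le hsub (hcardimg ▸ hcardS)).symm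
  have haS : a ∈ S := by
    simp only [hS, Multiset.mem_toFinset, Polynomial.mem_roots hne, Polynomial.IsRoot,
      Polynomial.eval_sub, Polynomial.eval_pow, Polynomial.eval_X]
    rw [h, sub_self]
  rw [heq] at haS
  simpa only [himg, Finset.mem_image, Finset.mem_univ, true_and] using haS

theorem stmt_5 (K L : Type*) [Field K] [Fintype K] [Field L] [Fintype L] [Algebra K L]
    (hrank : Module.finrank K L = 3) (α : L) :
    ∃ T₀ : MvPolynomial (Fin 3) K,
      MvPolynomial.map (algebraMap K L) T₀ = Tcub L (Fintype.card K) α := by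
  classical
  set q := Fintype.card K with hq
  -- characteristic
  obtain ⟨p, hp⟩ := CharP.exists K
  have hpp : p.Prime := CharP.char_is_prime K p
  haveI : Fact p.Prime := ⟨hpp⟩
  obtain ⟨n, -, hcard⟩ := FiniteField.card K p
  haveI : CharP L p := charP_of_injective_algebraMap (algebraMap K L).injective p
  set frob : L →+* L := iterateFrobenius L p n with hfrob
  have hfrobdef : ∀ a : L, frob a = a ^ q := by
    intro a; rw [hfrob, iterateFrobenius_def, ← hcard]
  -- key power identities
  have hL : Fintype.card L = q ^ 3 := by
    rw [← hrank]; exact Module.card_eq_pow_finrank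
  have h3 : ∀ a : L, (a ^ q ^ 2) ^ q = a := by
    intro a
    rw [← pow_mul]
    have : q ^ 2 * q = q ^ 3 := by ring
    rw [this, ← hL, FiniteField.pow_card]
  have h2 : ∀ a : L, (a ^ q) ^ q = a ^ q ^ 2 := by
    intro a; rw [← pow_mul, pow_two]
  -- map frob on the linear forms
  have hx : MvPolynomial.map frob (xLin L q α) = yLin L q α := by
    simp only [xLin, yLin, MvPolynomial.smul_eq_C_mul, map_add, map_mul, MvPolynomial.map_C,
      MvPolynomial.map_X, hfrobdef, h3, h2]
  have hy : MvPolynomial.map frob (yLin L q α) = zLin L q α := by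
    simp only [yLin, zLin, MvPolynomial.smul_eq_C_mul, map_add, map_mul, MvPolynomial.map_C,
      MvPolynomial.map_X, hfrobdef, h3, h2]
  have hz : MvPolynomial.map frob (zLin L q α) = xLin L q α := by
    simp only [zLin, xLin, MvPolynomial.smul_eq_C_mul, map_add, map_mul, MvPolynomial.map_C,
      MvPolynomial.map_X, hfrobdef, h3, h2]
  have hT : MvPolynomial.map frob (Tcub L q α) = Tcub L q α := by
    simp only [Tcub, map_mul, hx, hy, hz]; ring
  -- coefficients fixed by frobenius lie in K
  have hcoeff : ∀ d, ∃ k : K, algebraMap K L k = MvPolynomial.coeff d (Tcub L q α) := by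
    intro d
    apply fixed_mem_range_aux
    have := congrArg (MvPolynomial.coeff d) hT
    rwa [MvPolynomial.coeff_map, hfrobdef] at this
  -- build T₀
  set g : L → K := Function.invFun (algebraMap K L) with hg
  have hg0 : g 0 = 0 := by
    rw [hg, ← (algebraMap K L).map_zero,
      Function.leftInverse_invFun (algebraMap K L).injective 0]
  refine ⟨.ofCoeff <| Finsupp.mapRange g hg0 <| AddMonoidAlgebra.coeff (Tcub L q α), ?_⟩
  rw [MvPolynomial.map_mapRange_eq_iff]
  intro d
  exact Function.invFun_eq (hcoeff d)
end

section
/- Assume that (α, α^q, α^(q^2)) is a linearly independent family over K. Then every polynomial T₀ ∈ MvPolynomial (Fin 3) K satisfying MvPolynomial.map (algebraMap K L) T₀ = T is irreducible in MvPolynomial (Fin 3) K. -/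
open MvPolynomial

/-- Units in a multivariate polynomial ring over a domain are (unit) constants. -/
lemma mvUnit {R : Type*} [CommRing R] [IsDomain R] : ∀ (n : ℕ) (p : MvPolynomial (Fin n) R),
    IsUnit p → ∃ c : R, IsUnit c ∧ MvPolynomial.C c = p := by
  intro n
  induction n with
  | zero =>
    intro p hp
    obtain ⟨c, rfl⟩ := MvPolynomial.C_surjective (Fin 0) p
    refine ⟨c, ?_, rfl⟩
    have := hp.map (constantCoeff (σ := Fin 0) (R := R))
    simpa using this
  | succ n ih =>
    intro p hp
    have h1 : IsUnit (finSuccEquiv R n p) := hp.map (finSuccEquiv R n)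
    obtain ⟨r, hr, hCr⟩ := Polynomial.isUnit_iff.mp h1
    obtain ⟨c, hc, hCc⟩ := ih r hr
    refine ⟨c, hc, ?_⟩
    have h2 : (finSuccEquiv R n).symm (Polynomial.C (MvPolynomial.C c)) = MvPolynomial.C c := by
      have := MvPolynomial.finSuccEquiv_comp_C_eq_C (R := R) n
      exact congrArg (fun f => f c) (congrArg (fun g => g.toFun) this)
    rw [← h2, hCc, hCr, AlgEquiv.symm_apply_apply]

lemma primeX0 {L : Type*} [Field L] : Prime (X 0 : MvPolynomial (Fin 3) L) := by
  rw [← MulEquiv.prime_iff (finSuccEquiv L 2).toRingEquiv.toMulEquiv]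
  show Prime (finSuccEquiv L 2 (X 0))
  rw [finSuccEquiv_X_zero]
  exact Polynomial.prime_X

/-- A linear form with nonzero first coefficient is prime. -/
lemma primeLin {L : Type*} [Field L] (a b c : L) (ha : a ≠ 0) :
    Prime (a • X 0 + b • X 1 + c • X 2 : MvPolynomial (Fin 3) L) := by
  let φ : MvPolynomial (Fin 3) L →ₐ[L] MvPolynomial (Fin 3) L :=
    aeval ![a • X 0 + b • X 1 + c • X 2, X 1, X 2]
  let ψ : MvPolynomial (Fin 3) L →ₐ[L] MvPolynomial (Fin 3) L :=
    aeval ![a⁻¹ • (X 0 - b • X 1 - c • X 2), X 1, X 2]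
  have h1 : φ.comp ψ = AlgHom.id L _ := by
    apply MvPolynomial.algHom_ext
    intro i
    fin_cases i <;>
      simp [φ, ψ, smul_sub, smul_smul, inv_mul_cancel₀ ha, mul_inv_cancel₀ ha]
    all_goals match_scalars
    all_goals field_simp
    all_goals ring
  have h2 : ψ.comp φ = AlgHom.id L _ := by
    apply MvPolynomial.algHom_ext
    intro i
    fin_cases i <;>
      simp [φ, ψ, smul_sub, smul_smul, inv_mul_cancel₀ ha, mul_inv_cancel₀ ha]
    all_goals match_scalars
    all_goals field_simp
    all_goals ring
  let e : MvPolynomial (Fin 3) L ≃ₐ[L] MvPolynomial (Fin 3) L := AlgEquiv.ofAlgHom φ ψ h1 h2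
  have key : (a • X 0 + b • X 1 + c • X 2 : MvPolynomial (Fin 3) L) = e (X 0) := by
    simp [e, φ, AlgEquiv.ofAlgHom]
  rw [key, ← MulEquiv.prime_iff e.symm.toRingEquiv.toMulEquiv]
  show Prime (e.symm (e (X 0)))
  rw [AlgEquiv.symm_apply_apply]
  exact primeX0

lemma keyLI {K L : Type*} [Field K] [Field L] [Algebra K L] {v : Fin 3 → L}
    (hli : LinearIndependent K v) {d : L} (hd : d ≠ 0) {i j : Fin 3} (hij : i ≠ j)
    {k0 k1 : K} (h0 : algebraMap K L k0 = d * v i) (h1 : algebraMap K L k1 = d * v j) :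
    False := by
  have hpair : LinearIndependent K ![v i, v j] := by
    have hcomp : v ∘ ![i, j] = ![v i, v j] := by
      funext t; fin_cases t <;> rfl
    rw [← hcomp]
    refine hli.comp ![i, j] ?_
    intro s t hst
    fin_cases s <;> fin_cases t <;> simp_all
  rw [Fintype.linearIndependent_iff] at hpair
  have hsum : ∑ t : Fin 2, (![k1, -k0] t) • (![v i, v j] t) = 0 := by
    rw [Fin.sum_univ_two]
    simp only [Matrix.cons_val_zero, Matrix.cons_val_one, Matrix.head_cons]
    rw [Algebra.smul_def, h1, neg_smul, Algebra.smul_def, h0]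
    ring
  have hk1 : k1 = 0 := hpair ![k1, -k0] hsum 0
  rw [hk1, map_zero] at h1
  exact hli.ne_zero j (by
    rcases mul_eq_zero.mp h1.symm with h | h
    · exact absurd h hd
    · exact h)

lemma tree2 {M : Type*} [CommRing M] [IsDomain M] {y z : M} (hy : Prime y) (hz : Prime z)
    (P Q : M) (h : P * Q = y * z) :
    IsUnit P ∨ IsUnit Q ∨ (∃ u, IsUnit u ∧ (P = y * u ∨ P = z * u)) ∨
      (∃ u, IsUnit u ∧ (Q = y * u ∨ Q = z * u)) := by
  rcases hy.2.2 P Q ⟨z, h⟩ with ⟨P1, rfl⟩ | ⟨Q1, rfl⟩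
  · have h2 : P1 * Q = z := mul_left_cancel₀ hy.ne_zero (by linear_combination h)
    rcases hz.2.2 P1 Q ⟨1, by linear_combination h2⟩ with ⟨P2, rfl⟩ | ⟨Q1, rfl⟩
    · have h3 : P2 * Q = 1 := mul_left_cancel₀ hz.ne_zero (by linear_combination h2)
      exact Or.inr (Or.inl (IsUnit.of_mul_eq_one (a := Q) P2 (by rw [mul_comm]; exact h3)))
    · have h3 : P1 * Q1 = 1 := mul_left_cancel₀ hz.ne_zero (by linear_combination h2)
      exact Or.inr (Or.inr (Or.inr ⟨Q1,
        IsUnit.of_mul_eq_one (a := Q1) P1 (by rw [mul_comm]; exact h3), Or.inr rfl⟩))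
  · have h2 : P * Q1 = z := mul_left_cancel₀ hy.ne_zero (by linear_combination h)
    rcases hz.2.2 P Q1 ⟨1, by linear_combination h2⟩ with ⟨P1, rfl⟩ | ⟨Q2, rfl⟩
    · have h3 : P1 * Q1 = 1 := mul_left_cancel₀ hz.ne_zero (by linear_combination h2)
      exact Or.inr (Or.inr (Or.inl ⟨P1, IsUnit.of_mul_eq_one (a := P1) Q1 h3, Or.inr rfl⟩))
    · have h3 : P * Q2 = 1 := mul_left_cancel₀ hz.ne_zero (by linear_combination h2)
      exact Or.inl (IsUnit.of_mul_eq_one (a := P) Q2 h3)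

lemma tree {M : Type*} [CommRing M] [IsDomain M] {x y z : M}
    (hx : Prime x) (hy : Prime y) (hz : Prime z)
    (A B : M) (h : A * B = x * y * z) (hA : ¬IsUnit A) (hB : ¬IsUnit B) :
    (∃ u, IsUnit u ∧ (A = x * u ∨ A = y * u ∨ A = z * u)) ∨
      (∃ u, IsUnit u ∧ (B = x * u ∨ B = y * u ∨ B = z * u)) := by
  rcases hx.2.2 A B ⟨y * z, by linear_combination h⟩ with ⟨A1, rfl⟩ | ⟨B1, rfl⟩
  · have h2 : A1 * B = y * z := mul_left_cancel₀ hx.ne_zero (by linear_combination h)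
    rcases tree2 hy hz A1 B h2 with hu | hu | ⟨u, hu, hc⟩ | ⟨u, hu, hc⟩
    · exact Or.inl ⟨A1, hu, Or.inl rfl⟩
    · exact absurd hu hB
    · obtain ⟨w, hw⟩ := hu.exists_right_inv
      have hwu : IsUnit w := IsUnit.of_mul_eq_one (a := w) u (by rw [mul_comm]; exact hw)
      rcases hc with rfl | rfl
      · have huB : u * B = z := mul_left_cancel₀ hy.ne_zero (by linear_combination h2)
        refine Or.inr ⟨w, hwu, Or.inr (Or.inr ?_)⟩
        calc B = (u * w) * B := by rw [hw, one_mul]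
          _ = w * (u * B) := by ring
          _ = z * w := by rw [huB, mul_comm]
      · have huB : u * B = y := mul_left_cancel₀ hz.ne_zero (by linear_combination h2)
        refine Or.inr ⟨w, hwu, Or.inr (Or.inl ?_)⟩
        calc B = (u * w) * B := by rw [hw, one_mul]
          _ = w * (u * B) := by ring
          _ = y * w := by rw [huB, mul_comm]
    · exact Or.inr ⟨u, hu, Or.inr hc⟩
  · have h2 : A * B1 = y * z := mul_left_cancel₀ hx.ne_zero (by linear_combination h)
    rcases tree2 hy hz A B1 h2 with hu | hu | ⟨u, hu, hc⟩ | ⟨u, hu, hc⟩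
    · exact absurd hu hA
    · exact Or.inr ⟨B1, hu, Or.inl rfl⟩
    · exact Or.inl ⟨u, hu, Or.inr hc⟩
    · obtain ⟨w, hw⟩ := hu.exists_right_inv
      have hwu : IsUnit w := IsUnit.of_mul_eq_one (a := w) u (by rw [mul_comm]; exact hw)
      rcases hc with rfl | rfl
      · have huA : A * u = z := mul_left_cancel₀ hy.ne_zero (by linear_combination h2)
        refine Or.inl ⟨w, hwu, Or.inr (Or.inr ?_)⟩
        calc A = A * (u * w) := by rw [hw, mul_one]
          _ = (A * u) * w := by ring
          _ = z * w := by rw [huA]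
      · have huA : A * u = y := mul_left_cancel₀ hz.ne_zero (by linear_combination h2)
        refine Or.inl ⟨w, hwu, Or.inr (Or.inl ?_)⟩
        calc A = A * (u * w) := by rw [hw, mul_one]
          _ = (A * u) * w := by ring
          _ = y * w := by rw [huA]



theorem stmt_6 (K L : Type*) [Field K] [Fintype K] [Field L] [Fintype L] [Algebra K L]
    (hrank : Module.finrank K L = 3) (α : L)
    (hli : LinearIndependent K ![α, α ^ Fintype.card K, α ^ Fintype.card K ^ 2]) :
    ∀ T₀ : MvPolynomial (Fin 3) K,
      MvPolynomial.map (algebraMap K L) T₀ = Tcub L (Fintype.card K) α →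
      Irreducible T₀ := by
  intro T₀ hmap
  set q := Fintype.card K with hq
  set f := algebraMap K L with hf
  have hα : α ≠ 0 := by
    intro h
    exact hli.ne_zero 0 (by simp [h])
  have hx : Prime (xLin L q α) := primeLin _ _ _ hα
  have hy : Prime (yLin L q α) := primeLin _ _ _ (pow_ne_zero _ hα)
  have hz : Prime (zLin L q α) := primeLin _ _ _ (pow_ne_zero _ hα)
  have hinj : Function.Injective f := (algebraMap K L).injective
  -- units pull back along map f
  have hunit : ∀ g : MvPolynomial (Fin 3) K, IsUnit (MvPolynomial.map f g) → IsUnit g := by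
    intro g hg
    obtain ⟨c, hc, hCc⟩ := mvUnit 3 _ hg
    have hg0 : f (coeff 0 g) = c := by
      rw [← coeff_map, ← hCc, coeff_zero_C]
    have hgC : g = C (coeff 0 g) := by
      ext m
      rcases eq_or_ne m 0 with rfl | hm
      · simp
      · have hz0 : f (coeff m g) = 0 := by
          rw [← coeff_map, ← hCc, coeff_C, if_neg (fun hh => hm hh.symm)]
        have : coeff m g = 0 := hinj (by rw [hz0, map_zero])
        rw [this, coeff_C, if_neg (fun hh => hm hh.symm)]
    rw [hgC]
    have hne : coeff 0 g ≠ 0 := by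
      intro h0
      rw [h0, map_zero] at hg0
      exact hc.ne_zero hg0.symm
    exact (isUnit_iff_ne_zero.mpr hne).map (MvPolynomial.C (σ := Fin 3) (R := K))
  -- the key contradiction
  have final : ∀ (g : MvPolynomial (Fin 3) K) (u : MvPolynomial (Fin 3) L), IsUnit u →
      (MvPolynomial.map f g = xLin L q α * u ∨ MvPolynomial.map f g = yLin L q α * u ∨
        MvPolynomial.map f g = zLin L q α * u) → False := by
    intro g u hu hcase
    obtain ⟨d, hd, hCd⟩ := mvUnit 3 u hu
    have hd0 : d ≠ 0 := hd.ne_zero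
    rcases hcase with h | h | h
    · refine keyLI hli hd0 (show (0 : Fin 3) ≠ 1 by decide)
        (k0 := coeff (Finsupp.single 0 1) g) (k1 := coeff (Finsupp.single 1 1) g) ?_ ?_
      · show f _ = d * _
        rw [← coeff_map, h, ← hCd, mul_comm, coeff_C_mul]
        simp [xLin, coeff_X', Finsupp.single_eq_single_iff]
      · show f _ = d * _
        rw [← coeff_map, h, ← hCd, mul_comm, coeff_C_mul]
        simp [xLin, coeff_X', Finsupp.single_eq_single_iff]
    · refine keyLI hli hd0 (show (1 : Fin 3) ≠ 2 by decide)
        (k0 := coeff (Finsupp.single 0 1) g) (k1 := coeff (Finsupp.single 1 1) g) ?_ ?_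
      · show f _ = d * _
        rw [← coeff_map, h, ← hCd, mul_comm, coeff_C_mul]
        simp [yLin, coeff_X', Finsupp.single_eq_single_iff]
      · show f _ = d * _
        rw [← coeff_map, h, ← hCd, mul_comm, coeff_C_mul]
        simp [yLin, coeff_X', Finsupp.single_eq_single_iff]
    · refine keyLI hli hd0 (show (0 : Fin 3) ≠ 1 by decide)
        (k0 := coeff (Finsupp.single 1 1) g) (k1 := coeff (Finsupp.single 2 1) g) ?_ ?_
      · show f _ = d * _
        rw [← coeff_map, h, ← hCd, mul_comm, coeff_C_mul]
        simp [zLin, coeff_X', Finsupp.single_eq_single_iff]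
      · show f _ = d * _
        rw [← coeff_map, h, ← hCd, mul_comm, coeff_C_mul]
        simp [zLin, coeff_X', Finsupp.single_eq_single_iff]
  constructor
  · intro h
    have h1 := h.map (MvPolynomial.map f)
    rw [hmap] at h1
    unfold Tcub at h1
    exact hx.not_unit (isUnit_of_mul_isUnit_left (isUnit_of_mul_isUnit_left h1))
  · intro a b hab
    by_contra hcon
    push_neg at hcon
    obtain ⟨ha, hb⟩ := hcon
    have hAB : MvPolynomial.map f a * MvPolynomial.map f b =
        xLin L q α * yLin L q α * zLin L q α := by
      rw [← map_mul, ← hab, hmap]; rfl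
    have hA : ¬IsUnit (MvPolynomial.map f a) := fun h => ha (hunit a h)
    have hB : ¬IsUnit (MvPolynomial.map f b) := fun h => hb (hunit b h)
    rcases tree hx hy hz _ _ hAB hA hB with ⟨u, hu, hc⟩ | ⟨u, hu, hc⟩
    · exact final a u hu hc
    · exact final b u hu hc
end

section
/- Let K and L be finite fields equipped with Algebra K L and Module.finrank K L = 3, set q = Fintype.card K, and let α ∈ L. If the family (α, α^q, α^(q^2)) is linearly independent over K, then the 3×3 matrix over L with rows (α, α^q, α^(q^2)), (α^q, α^(q^2), α), (α^(q^2), α, α^q) has nonzero determinant (equivalently, it is invertible). -/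
theorem stmt_7 (K L : Type*) [Field K] [Fintype K] [Field L] [Fintype L] [Algebra K L]
    (hrank : Module.finrank K L = 3) (α : L)
    (hli : LinearIndependent K ![α, α ^ Fintype.card K, α ^ Fintype.card K ^ 2]) :
    (Matrix.of ![![α, α ^ Fintype.card K, α ^ Fintype.card K ^ 2],
                 ![α ^ Fintype.card K, α ^ Fintype.card K ^ 2, α],
                 ![α ^ Fintype.card K ^ 2, α, α ^ Fintype.card K]] :
        Matrix (Fin 3) (Fin 3) L).det ≠ 0 := by
  intro hdet
  classical
  set q := Fintype.card K with hq
  have hq2 : 2 ≤ q := Fintype.one_lt_card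
  obtain ⟨p, hp⟩ := CharP.exists K
  haveI := hp
  haveI : Fact p.Prime := ⟨CharP.char_is_prime K p⟩
  obtain ⟨n, -, hn⟩ := FiniteField.card K p
  haveI : CharP L p := charP_of_injective_algebraMap (algebraMap K L).injective p
  have hcardL : Fintype.card L = q ^ 3 := by
    rw [Module.card_eq_pow_finrank (K := K), hrank]
  have hα3 : α ^ q ^ 3 = α := by rw [← hcardL]; exact FiniteField.pow_card α
  have hα4 : α ^ q ^ 4 = α ^ q := by
    have : q ^ 4 = q ^ 3 * q := by ring
    rw [this, pow_mul, hα3]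
  have hfrob : ∀ (m : ℕ) (x y : L), (x + y) ^ q ^ m = x ^ q ^ m + y ^ q ^ m := by
    intro m x y
    have h : q ^ m = p ^ ((n : ℕ) * m) := by rw [hq, hn, ← pow_mul]
    rw [h]
    exact add_pow_char_pow x y p _
  have hsmul : ∀ (m : ℕ) (c : K) (x : L), (c • x) ^ q ^ m = c • x ^ q ^ m := by
    intro m c x
    rw [Algebra.smul_def, Algebra.smul_def, mul_pow, ← map_pow, FiniteField.pow_card_pow]
  -- rows linearly dependent
  obtain ⟨v, hv0, hvM⟩ := Matrix.exists_vecMul_eq_zero_iff.mpr hdet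
  have hcol : ∀ j, ∑ i : Fin 3, v i *
      (Matrix.of ![![α, α ^ q, α ^ q ^ 2],
                 ![α ^ q, α ^ q ^ 2, α],
                 ![α ^ q ^ 2, α, α ^ q]] : Matrix (Fin 3) (Fin 3) L) i j = 0 := by
    intro j
    have := congrFun hvM j
    simpa [Matrix.vecMul, dotProduct] using this
  -- the linear map x ↦ ∑ v i * x ^ q ^ i
  let T : L →ₗ[K] L :=
    { toFun := fun x => ∑ i : Fin 3, v i * x ^ q ^ (i : ℕ)
      map_add' := by
        intro x y
        simp only [hfrob, mul_add]
        rw [Finset.sum_add_distrib]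
      map_smul' := by
        intro c x
        simp only [hsmul, RingHom.id_apply]
        rw [Finset.smul_sum]
        exact Finset.sum_congr rfl fun i _ => mul_smul_comm c (v i) _ }
  have hcard : Fintype.card (Fin 3) = Module.finrank K L := by simp [hrank]
  let b := basisOfLinearIndependentOfCardEqFinrank hli hcard
  have hb : ⇑b = ![α, α ^ q, α ^ q ^ 2] :=
    coe_basisOfLinearIndependentOfCardEqFinrank hli hcard
  have e11 : (α ^ q) ^ q = α ^ q ^ 2 := by rw [← pow_mul, ← pow_two]
  have e12 : (α ^ q) ^ q ^ 2 = α := by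
    rw [← pow_mul]
    have h' : q * q ^ 2 = q ^ 3 := by ring
    rw [h', hα3]
  have e21 : (α ^ q ^ 2) ^ q = α := by
    rw [← pow_mul]
    have h' : q ^ 2 * q = q ^ 3 := by ring
    rw [h', hα3]
  have e22 : (α ^ q ^ 2) ^ q ^ 2 = α ^ q := by
    rw [← pow_mul]
    have h' : q ^ 2 * q ^ 2 = q ^ 4 := by ring
    rw [h', hα4]
  have hT : T = 0 := by
    apply b.ext
    intro j
    rw [hb]
    have h0 := hcol 0
    have h1 := hcol 1
    have h2 := hcol 2
    simp only [Fin.sum_univ_three, Matrix.of_apply, Matrix.cons_val_zero, Matrix.cons_val_one,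
      Matrix.head_cons, Matrix.cons_val_two, Matrix.tail_cons, Matrix.head_fin_const,
      Matrix.cons_val_fin_one] at h0 h1 h2
    fin_cases j <;>
      simp [T, Fin.sum_univ_three, e11, e12, e21, e22] <;>
      [linear_combination h0; linear_combination h1; linear_combination h2]
  have hTx : ∀ x : L, ∑ i : Fin 3, v i * x ^ q ^ (i : ℕ) = 0 := by
    intro x
    have := congrArg (fun f : L →ₗ[K] L => f x) hT
    simpa [T] using this
  -- Dedekind independence of the monoid homs x ↦ x ^ q ^ i
  let F : Fin 3 → (L →* L) := fun i => powMonoidHom (q ^ (i : ℕ))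
  have hFinj : Function.Injective F := by
    intro i j hij
    have hx : ∀ x : L, x ^ q ^ (i : ℕ) = x ^ q ^ (j : ℕ) := fun x =>
      DFunLike.congr_fun hij x
    obtain ⟨g, hg⟩ := IsCyclic.exists_generator (α := Lˣ)
    have horder : orderOf g = q ^ 3 - 1 := by
      rw [orderOf_eq_card_of_forall_mem_zpowers hg, Nat.card_eq_fintype_card,
        Fintype.card_units, hcardL]
    have hgu : g ^ q ^ (i : ℕ) = g ^ q ^ (j : ℕ) := by
      ext
      push_cast
      exact hx g
    rw [pow_inj_mod, horder] at hgu
    have hlt : ∀ k : Fin 3, q ^ (k : ℕ) < q ^ 3 - 1 := by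
      intro k
      have hk2 : (k : ℕ) ≤ 2 := by omega
      have h1 : q ^ (k : ℕ) ≤ q ^ 2 := Nat.pow_le_pow_right (by omega) hk2
      have h2 : q ^ 2 * 2 ≤ q ^ 2 * q := Nat.mul_le_mul_left _ hq2
      have h3 : 4 ≤ q ^ 2 := by nlinarith
      have h4 : q ^ 2 * q = q ^ 3 := by ring
      omega
    rw [Nat.mod_eq_of_lt (hlt i), Nat.mod_eq_of_lt (hlt j)] at hgu
    have := Nat.pow_right_injective hq2 hgu
    exact Fin.ext this
  have hLI : LinearIndependent L (fun i : Fin 3 => ⇑(F i)) :=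
    (linearIndependent_monoidHom L L).comp F hFinj
  have hzero : ∀ i, v i = 0 := by
    apply Fintype.linearIndependent_iff.mp hLI
    funext x
    simpa [F, powMonoidHom, Fin.sum_univ_three, smul_eq_mul] using hTx x
  exact hv0 (funext hzero)
end

section
/- Assume that (α, α^q, α^(q^2)) is a linearly independent family over K. Then the four polynomials F, G, H, T are linearly independent over L in MvPolynomial (Fin 3) L. -/
open MvPolynomial

set_option maxHeartbeats 1000000 in
theorem stmt_8 (K L : Type*) [Field K] [Fintype K] [Field L] [Fintype L] [Algebra K L]
    (hrank : Module.finrank K L = 3) (α : L)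
    (hli : LinearIndependent K ![α, α ^ Fintype.card K, α ^ Fintype.card K ^ 2]) :
    LinearIndependent L ![Fcub L (Fintype.card K) α, Gcub L (Fintype.card K) α,
      Hcub L (Fintype.card K) α, Tcub L (Fintype.card K) α] := by
  classical
  set q := Fintype.card K with hqdef
  have hq1 : 1 < q := Fintype.one_lt_card
  have hcardL : Fintype.card L = q ^ 3 := by
    rw [Module.card_eq_pow_finrank (K := K) (V := L), hrank]
  have hpowL : ∀ x : L, x ^ q ^ 3 = x := by
    intro x; rw [← hcardL]; exact FiniteField.pow_card x
  obtain ⟨p, hp⟩ := CharP.exists K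
  haveI hpprime : Fact p.Prime := ⟨CharP.char_is_prime K p⟩
  haveI hpL : CharP L p := charP_of_injective_algebraMap (algebraMap K L).injective p
  haveI : ExpChar L p := ExpChar.prime hpprime.out
  obtain ⟨n, -, hqn⟩ := FiniteField.card K p
  have hq_add : ∀ x y : L, (x + y) ^ q = x ^ q + y ^ q := by
    intro x y; rw [hqdef, hqn]; exact add_pow_char_pow x y p n
  have hq2_add : ∀ x y : L, (x + y) ^ q ^ 2 = x ^ q ^ 2 + y ^ q ^ 2 := by
    intro x y; rw [hqdef, hqn, ← pow_mul]; exact add_pow_char_pow x y p (n*2)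
  have halg : ∀ a : K, (algebraMap K L a) ^ q = algebraMap K L a := by
    intro a; rw [← map_pow, FiniteField.pow_card]
  have halg2 : ∀ a : K, (algebraMap K L a) ^ q ^ 2 = algebraMap K L a := by
    intro a; rw [pow_two, pow_mul, halg, halg]
  obtain ⟨M, hM⟩ : ∃ M' : Matrix (Fin 3) (Fin 3) L,
      M' = !![α, α ^ q, α ^ q ^ 2; α ^ q, α ^ q ^ 2, α; α ^ q ^ 2, α, α ^ q] := ⟨_, rfl⟩
  have e1 : (α ^ q) ^ q = α ^ q ^ 2 := by rw [← pow_mul, pow_two]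
  have e2 : (α ^ q) ^ q ^ 2 = α := by rw [← pow_mul, ← pow_succ']; exact hpowL α
  have e3 : (α ^ q ^ 2) ^ q = α := by rw [← pow_mul, ← pow_succ]; exact hpowL α
  have e4 : (α ^ q ^ 2) ^ q ^ 2 = α ^ q := by
    rw [← pow_mul, show q ^ 2 * q ^ 2 = q ^ 3 * q by ring, pow_mul, hpowL]
  have hMunit : IsUnit M := by
    rw [← Matrix.linearIndependent_rows_iff_isUnit, Fintype.linearIndependent_iff]
    intro c hc
    have h0 := congrFun hc 0
    have h1 := congrFun hc 1
    have h2 := congrFun hc 2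
    simp only [hM, Finset.sum_apply, Pi.smul_apply, smul_eq_mul, Fin.sum_univ_three,
      Matrix.cons_val_zero, Matrix.cons_val_one, Matrix.head_cons, Matrix.cons_val_two,
      Matrix.tail_cons, Matrix.head_fin_const, Pi.zero_apply, Matrix.cons_val', Matrix.of_apply,
      Matrix.empty_val', Matrix.cons_val_fin_one] at h0 h1 h2
    -- the additive map x ↦ c0 x + c1 x^q + c2 x^(q²)
    set f : L →ₗ[K] L :=
      { toFun := fun x => c 0 * x + c 1 * x ^ q + c 2 * x ^ q ^ 2
        map_add' := by
          intro x y
          rw [hq_add, hq2_add]; ring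
        map_smul' := by
          intro a x
          simp only [Algebra.smul_def, RingHom.id_apply]
          rw [mul_pow, mul_pow, halg, halg2]; ring } with hf
    have hcard3 : Fintype.card (Fin 3) = Module.finrank K L := by simp [hrank]
    set B := basisOfLinearIndependentOfCardEqFinrank hli hcard3 with hB
    have hBcoe : ⇑B = ![α, α ^ q, α ^ q ^ 2] :=
      coe_basisOfLinearIndependentOfCardEqFinrank hli hcard3
    have hb0 : B 0 = α := by have := congrFun hBcoe 0; simpa using this
    have hb1 : B 1 = α ^ q := by have := congrFun hBcoe 1; simpa using this
    have hb2 : B 2 = α ^ q ^ 2 := by have := congrFun hBcoe 2; simpa using this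
    have hf0 : f = 0 := by
      apply B.ext
      intro i
      fin_cases i
      · show f (B 0) = (0 : L →ₗ[K] L) (B 0)
        rw [hb0]
        show c 0 * α + c 1 * α ^ q + c 2 * α ^ q ^ 2 = 0
        exact h0
      · show f (B 1) = (0 : L →ₗ[K] L) (B 1)
        rw [hb1]
        show c 0 * α ^ q + c 1 * (α ^ q) ^ q + c 2 * (α ^ q) ^ q ^ 2 = 0
        rw [e1, e2]
        exact h1
      · show f (B 2) = (0 : L →ₗ[K] L) (B 2)
        rw [hb2]
        show c 0 * α ^ q ^ 2 + c 1 * (α ^ q ^ 2) ^ q + c 2 * (α ^ q ^ 2) ^ q ^ 2 = 0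
        rw [e3, e4]
        exact h2
    have hall : ∀ x : L, c 0 * x + c 1 * x ^ q + c 2 * x ^ q ^ 2 = 0 := by
      intro x
      have := LinearMap.ext_iff.mp hf0 x
      simpa [hf] using this
    -- polynomial argument
    set P : Polynomial L := Polynomial.C (c 0) * Polynomial.X ^ 1 +
        Polynomial.C (c 1) * Polynomial.X ^ q + Polynomial.C (c 2) * Polynomial.X ^ q ^ 2 with hP
    have hPeval : ∀ x : L, P.eval x = 0 := by
      intro x
      simp only [hP, Polynomial.eval_add, Polynomial.eval_mul, Polynomial.eval_C,
        Polynomial.eval_pow, Polynomial.eval_X, pow_one]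
      exact hall x
    have hPdeg : P.natDegree < Fintype.card L := by
      have hle : P.natDegree ≤ q ^ 2 := by
        refine le_trans (Polynomial.natDegree_add_le _ _) ?_
        simp only [max_le_iff]
        constructor
        · refine le_trans (Polynomial.natDegree_add_le _ _) ?_
          simp only [max_le_iff]
          refine ⟨le_trans (Polynomial.natDegree_C_mul_le _ _) ?_,
            le_trans (Polynomial.natDegree_C_mul_le _ _) ?_⟩
          · rw [Polynomial.natDegree_X_pow]; nlinarith
          · rw [Polynomial.natDegree_X_pow]; nlinarith
        · exact le_trans (Polynomial.natDegree_C_mul_le _ _) (by rw [Polynomial.natDegree_X_pow])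
      rw [hcardL]
      have : q ^ 2 < q ^ 3 := Nat.pow_lt_pow_right hq1 (by norm_num)
      omega
    have hP0 : P = 0 :=
      Polynomial.eq_zero_of_natDegree_lt_card_of_eval_eq_zero P Function.injective_id
        (fun x => hPeval x) (by simpa using hPdeg)
    have hcoeff : ∀ k : ℕ, P.coeff k = 0 := by intro k; rw [hP0]; simp
    have hq2ge : 4 ≤ q ^ 2 := by nlinarith
    have hqq : q < q ^ 2 := by nlinarith
    have hne1 : (1:ℕ) ≠ q := by omega
    have hne2 : (1:ℕ) ≠ q ^ 2 := by intro hh; rw [← hh] at hq2ge; omega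
    have hne3 : q ≠ q ^ 2 := by intro hh; rw [← hh] at hqq; omega
    have hc0 : c 0 = 0 := by
      have h := hcoeff 1
      simp only [hP, Polynomial.coeff_add, Polynomial.coeff_C_mul, Polynomial.coeff_X_pow] at h
      rw [if_neg hne1, if_neg hne2] at h
      simpa using h
    have hc1 : c 1 = 0 := by
      have h := hcoeff q
      simp only [hP, Polynomial.coeff_add, Polynomial.coeff_C_mul, Polynomial.coeff_X_pow] at h
      rw [if_neg hne3] at h
      rw [if_neg (fun hh : q = 1 => hne1 hh.symm)] at h
      simpa using h
    have hc2 : c 2 = 0 := by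
      have h := hcoeff (q ^ 2)
      simp only [hP, Polynomial.coeff_add, Polynomial.coeff_C_mul, Polynomial.coeff_X_pow] at h
      rw [if_neg (fun hh : q ^ 2 = 1 => hne2 hh.symm),
        if_neg (fun hh : q ^ 2 = q => hne3 hh.symm)] at h
      simpa using h
    intro i; fin_cases i
    · exact hc0
    · exact hc1
    · exact hc2
  -- inverse matrix substitution
  have hdet : IsUnit M.det := (Matrix.isUnit_iff_isUnit_det M).mp hMunit
  obtain ⟨N, hMN⟩ : ∃ N : Matrix (Fin 3) (Fin 3) L, M * N = 1 :=
    ⟨M⁻¹, Matrix.mul_nonsing_inv M hdet⟩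
  obtain ⟨w, hw⟩ : ∃ w' : Fin 3 → MvPolynomial (Fin 3) L,
      w' = fun j => ∑ k, N j k • X k := ⟨_, rfl⟩
  have key : ∀ i : Fin 3, (aeval (R := L) w) (∑ j, M i j • X j) = X i := by
    intro i
    have step : (aeval (R := L) w) (∑ j, M i j • X j) = ∑ k, (M * N) i k • X k := by
      rw [map_sum]
      simp only [map_smul, aeval_X, hw]
      simp only [Finset.smul_sum, smul_smul]
      rw [Finset.sum_comm]
      refine Finset.sum_congr rfl fun k _ => ?_
      rw [Matrix.mul_apply, Finset.sum_smul]
    rw [step, hMN]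
    rw [Finset.sum_eq_single i]
    · rw [Matrix.one_apply_eq, one_smul]
    · intro b _ hb
      rw [Matrix.one_apply_ne (Ne.symm hb), zero_smul]
    · intro hi
      exact absurd (Finset.mem_univ i) hi
  have hx : (aeval (R := L) w) (xLin L q α) = X 0 := by
    have h := key 0
    rw [Fin.sum_univ_three] at h
    simp only [hM, Matrix.cons_val_zero, Matrix.cons_val_one, Matrix.head_cons,
      Matrix.cons_val_two, Matrix.tail_cons, Matrix.cons_val', Matrix.of_apply,
      Matrix.empty_val', Matrix.cons_val_fin_one] at h
    rw [xLin]
    exact h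
  have hy : (aeval (R := L) w) (yLin L q α) = X 1 := by
    have h := key 1
    rw [Fin.sum_univ_three] at h
    simp only [hM, Matrix.cons_val_zero, Matrix.cons_val_one, Matrix.head_cons,
      Matrix.cons_val_two, Matrix.tail_cons, Matrix.cons_val', Matrix.of_apply,
      Matrix.empty_val', Matrix.cons_val_fin_one] at h
    rw [yLin]
    exact h
  have hz : (aeval (R := L) w) (zLin L q α) = X 2 := by
    have h := key 2
    rw [Fin.sum_univ_three] at h
    simp only [hM, Matrix.cons_val_zero, Matrix.cons_val_one, Matrix.head_cons,
      Matrix.cons_val_two, Matrix.tail_cons, Matrix.cons_val', Matrix.of_apply,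
      Matrix.empty_val', Matrix.cons_val_fin_one] at h
    rw [zLin]
    exact h
  -- images of the cubics
  have hFm : (aeval (R := L) w) (Fcub L q α) = X 0 ^ 2 * X 1 := by
    rw [Fcub, map_mul, map_pow, hx, hy]
  have hGm : (aeval (R := L) w) (Gcub L q α) = X 1 ^ 2 * X 2 := by
    rw [Gcub, map_mul, map_pow, hy, hz]
  have hHm : (aeval (R := L) w) (Hcub L q α) = X 2 ^ 2 * X 0 := by
    rw [Hcub, map_mul, map_pow, hz, hx]
  have hTm : (aeval (R := L) w) (Tcub L q α) = X 0 * X 1 * X 2 := by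
    rw [Tcub, map_mul, map_mul, hx, hy, hz]
  -- linear independence of the four monomials
  obtain ⟨d, hdd⟩ : ∃ d' : Fin 4 → (Fin 3 →₀ ℕ),
      d' = ![Finsupp.single 0 2 + Finsupp.single 1 1,
        Finsupp.single 1 2 + Finsupp.single 2 1,
        Finsupp.single 2 2 + Finsupp.single 0 1,
        Finsupp.single 0 1 + Finsupp.single 1 1 + Finsupp.single 2 1] := ⟨_, rfl⟩
  have hdval : ∀ i : Fin 4, (d i 0, d i 1) = ![(2,1), (0,2), (1,0), (1,1)] i := by
    intro i
    fin_cases i <;> simp [hdd, Finsupp.single_apply]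
  have hdinj : Function.Injective d := by
    intro i j hij
    have := (hdval i).symm.trans ((congrArg (fun s : Fin 3 →₀ ℕ => (s 0, s 1)) hij).trans (hdval j))
    fin_cases i <;> fin_cases j <;> first | rfl | exact absurd this (by decide)
  have hmono : LinearIndependent L
      ![(X 0 : MvPolynomial (Fin 3) L) ^ 2 * X 1, X 1 ^ 2 * X 2, X 2 ^ 2 * X 0,
        X 0 * X 1 * X 2] := by
    have hb := ((MvPolynomial.basisMonomials (Fin 3) L).linearIndependent).comp d hdinj
    have hco : (⇑(MvPolynomial.basisMonomials (Fin 3) L) ∘ d) =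
        ![(X 0 : MvPolynomial (Fin 3) L) ^ 2 * X 1, X 1 ^ 2 * X 2, X 2 ^ 2 * X 0,
          X 0 * X 1 * X 2] := by
      funext i
      fin_cases i <;>
        simp [hdd, MvPolynomial.coe_basisMonomials, X_pow_eq_monomial,
          MvPolynomial.X, monomial_mul, monomial_pow, Finsupp.smul_single]
    rwa [hco] at hb
  -- conclude
  have hcomp : ((aeval (R := L) w).toLinearMap ∘
      ![Fcub L q α, Gcub L q α, Hcub L q α, Tcub L q α]) =
      ![(X 0 : MvPolynomial (Fin 3) L) ^ 2 * X 1, X 1 ^ 2 * X 2, X 2 ^ 2 * X 0,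
        X 0 * X 1 * X 2] := by
    funext i
    fin_cases i
    · exact hFm
    · exact hGm
    · exact hHm
    · exact hTm
  exact LinearIndependent.of_comp (aeval (R := L) w).toLinearMap (by rw [hcomp]; exact hmono)
end

section
/- Let F be a finite field whose characteristic is not 3. Then there exist three homogeneous polynomials F₀, F₁, F₂ of degree 3 in MvPolynomial (Fin 3) F, linearly independent over F, such that for every nonzero tuple (a₀,a₁,a₂) ∈ F³ the plane cubic f = a₀•F₀ + a₁•F₁ + a₂•F₂ is smooth: for every point (u₀,u₁,u₂) ∈ (AlgebraicClosure F)³ with (u₀,u₁,u₂) ≠ (0,0,0) at which the image f̄ of f in MvPolynomial (Fin 3) (AlgebraicClosure F) evaluates to 0, at least one of the three partial derivatives MvPolynomial.pderiv i f̄ (i = 0,1,2) evaluates to a nonzero value at (u₀,u₁,u₂). -/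
section AuxA
open Polynomial

theorem exists_irred_cubic (F : Type*) [Field F] [Fintype F] :
    ∃ g : Polynomial F, g.Monic ∧ Irreducible g ∧ g.natDegree = 3 := by
  classical
  set Fb := AlgebraicClosure F
  have hφinj : Function.Injective (algebraMap F Fb) := (algebraMap F Fb).injective
  obtain ⟨p, hp⟩ := CharP.exists F
  obtain ⟨n, hpprime, hcard⟩ := FiniteField.card F p
  haveI : Fact p.Prime := ⟨hpprime⟩
  haveI : CharP Fb p := charP_of_injective_algebraMap hφinj p
  set q := Fintype.card F with hq
  set T : Fb[X] := X ^ (p ^ (3 * (n : ℕ))) - X with hT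
  have hq3 : q ^ 3 = p ^ (3 * (n : ℕ)) := by
    rw [hcard, ← pow_mul, Nat.mul_comm]
  have hTsep : T.Separable := galois_poly_separable p _ (dvd_pow_self p (by positivity))
  have hTne : T ≠ 0 := FiniteField.X_pow_card_pow_sub_X_ne_zero Fb (by positivity) hpprime.one_lt
  have hTdeg : T.natDegree = p ^ (3 * (n : ℕ)) :=
    FiniteField.X_pow_card_pow_sub_X_natDegree_eq Fb (by positivity) hpprime.one_lt
  have hTsplits : T.Splits := IsAlgClosed.splits T
  set S : Subfield Fb := RingHom.eqLocusField (iterateFrobenius Fb p (3 * n)) (RingHom.id Fb)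
    with hS
  have hmemS : ∀ x : Fb, x ∈ S ↔ x ^ (p ^ (3 * (n : ℕ))) = x := by
    intro x
    simp [hS, RingHom.eqLocusField, RingHom.eqLocus, iterateFrobenius_def]
  have hsetS : (S : Set Fb) = ↑(T.roots.toFinset) := by
    ext x
    simp only [SetLike.mem_coe, hmemS, Finset.coe_sort_coe, Multiset.mem_toFinset,
      Finset.mem_coe, mem_roots hTne, IsRoot.def, hT, eval_sub, eval_pow, eval_X, sub_eq_zero]
    rw [mem_roots', IsRoot.def, eval_sub, eval_pow, eval_X, sub_eq_zero]
    exact ⟨fun h => ⟨hTne, h⟩, fun h => h.2⟩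
  have hfin : (S : Set Fb).Finite := by rw [hsetS]; exact (T.roots.toFinset : Finset Fb).finite_toSet
  haveI : Fintype S := hfin.fintype
  have hcardS : Fintype.card S = q ^ 3 := by
    have h1 : Nat.card S = Nat.card (↑(T.roots.toFinset) : Set Fb) :=
      Nat.card_congr (Equiv.setCongr hsetS)
    have h2 : Nat.card (↑(T.roots.toFinset) : Set Fb) = T.roots.toFinset.card := by
      rw [Nat.card_coe_set_eq, Set.ncard_coe_finset]
    rw [h2, Multiset.toFinset_card_of_nodup (Polynomial.nodup_roots hTsep),
      splits_iff_card_roots.mp hTsplits, hTdeg, ← hq3] at h1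
    rw [← Nat.card_eq_fintype_card, h1]
  -- algebra structure
  have hpow : ∀ x : F, algebraMap F Fb x ∈ S := by
    intro x
    rw [hmemS, ← hq3, ← map_pow]
    congr 1
    rw [pow_succ, pow_succ, pow_succ, pow_zero, one_mul, pow_mul, pow_mul,
      FiniteField.pow_card, FiniteField.pow_card, FiniteField.pow_card]
  let ψ : F →+* S := (algebraMap F Fb).codRestrict S.toSubring hpow
  letI : Algebra F S := ψ.toAlgebra
  haveI : FiniteDimensional F S := Module.Finite.of_finite
  have hrank : Module.finrank F S = 3 := by
    have := Module.card_eq_pow_finrank (K := F) (V := S)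
    rw [hcardS, ← hq] at this
    exact (Nat.pow_right_injective Fintype.one_lt_card this.symm)
  -- element not in the base field
  have hex : ∃ x : S, x ∉ (algebraMap F S).range := by
    by_contra h
    push_neg at h
    have hsurj : Function.Surjective (algebraMap F S) := by
      intro y
      obtain ⟨x, hx⟩ := h y
      exact ⟨x, hx⟩
    have := Fintype.card_le_of_surjective _ hsurj
    rw [hcardS] at this
    have : q < q ^ 3 := by
      calc q = q ^ 1 := (pow_one q).symm
      _ < q ^ 3 := Nat.pow_lt_pow_right Fintype.one_lt_card (by norm_num)
    omega
  obtain ⟨x, hx⟩ := hex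
  have hint : IsIntegral F x := IsIntegral.of_finite F x
  refine ⟨minpoly F x, minpoly.monic hint, minpoly.irreducible hint, ?_⟩
  have hd1 : (minpoly F x).natDegree ≠ 1 :=
    fun h => hx (minpoly.natDegree_eq_one_iff.mp h)
  have hdvd : (minpoly F x).natDegree ∣ 3 := by
    have h1 : Module.finrank F (IntermediateField.adjoin F {x} : IntermediateField F S)
        = (minpoly F x).natDegree := IntermediateField.adjoin.finrank hint
    have h2 := Module.finrank_mul_finrank F (IntermediateField.adjoin F {x} :
        IntermediateField F S) S
    rw [hrank, h1] at h2
    exact ⟨_, h2.symm⟩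
  rcases (Nat.prime_three.eq_one_or_self_of_dvd _ hdvd) with h | h
  · exact absurd h hd1
  · exact h

end AuxA

section AuxB
open MvPolynomial
open scoped Polynomial

noncomputable def stmt10cub {R : Type*} [CommRing R] (p : ℕ → R) (i : ℕ) :
    MvPolynomial (Fin 3) R :=
  C (p i) * X 0 ^ 3 + C (3 * p (i+1)) * X 0 ^ 2 * X 1 + C (3 * p (i+2)) * X 0 ^ 2 * X 2
    + C (3 * p (i+2)) * X 0 * X 1 ^ 2 + C (6 * p (i+3)) * X 0 * X 1 * X 2
    + C (3 * p (i+4)) * X 0 * X 2 ^ 2 + C (p (i+3)) * X 1 ^ 3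
    + C (3 * p (i+4)) * X 1 ^ 2 * X 2 + C (3 * p (i+5)) * X 1 * X 2 ^ 2
    + C (p (i+6)) * X 2 ^ 3

lemma stmt10h3 {R : Type*} [CommRing R] (a : R) (i : Fin 3) :
    (C a * X i ^ 3 : MvPolynomial (Fin 3) R).IsHomogeneous 3 := by
  simpa using ((isHomogeneous_C _ a).mul ((isHomogeneous_X _ i).pow 3))

lemma stmt10h21 {R : Type*} [CommRing R] (a : R) (i j : Fin 3) :
    (C a * X i ^ 2 * X j : MvPolynomial (Fin 3) R).IsHomogeneous 3 := by
  simpa using (((isHomogeneous_C _ a).mul ((isHomogeneous_X _ i).pow 2)).mul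
    (isHomogeneous_X _ j))

lemma stmt10h12 {R : Type*} [CommRing R] (a : R) (i j : Fin 3) :
    (C a * X i * X j ^ 2 : MvPolynomial (Fin 3) R).IsHomogeneous 3 := by
  simpa using (((isHomogeneous_C _ a).mul (isHomogeneous_X _ i)).mul
    ((isHomogeneous_X _ j).pow 2))

lemma stmt10h111 {R : Type*} [CommRing R] (a : R) (i j k : Fin 3) :
    (C a * X i * X j * X k : MvPolynomial (Fin 3) R).IsHomogeneous 3 := by
  simpa using ((((isHomogeneous_C _ a).mul (isHomogeneous_X _ i)).mul
    (isHomogeneous_X _ j)).mul (isHomogeneous_X _ k))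

lemma stmt10cub_hom {R : Type*} [CommRing R] (p : ℕ → R) (i : ℕ) :
    (stmt10cub p i).IsHomogeneous 3 := by
  unfold stmt10cub
  repeat apply MvPolynomial.IsHomogeneous.add
  all_goals first
    | with_reducible exact stmt10h3 _ _
    | with_reducible exact stmt10h21 _ _ _
    | with_reducible exact stmt10h12 _ _ _
    | with_reducible exact stmt10h111 _ _ _ _

lemma stmt10cub_eq {R : Type*} [CommRing R] (t0 t1 t2 : R) (i : ℕ) :
    stmt10cub (fun k => t0 ^ k + t1 ^ k + t2 ^ k) i =
      C t0 ^ i * (X 0 + C t0 * X 1 + C t0 ^ 2 * X 2) ^ 3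
      + C t1 ^ i * (X 0 + C t1 * X 1 + C t1 ^ 2 * X 2) ^ 3
      + C t2 ^ i * (X 0 + C t2 * X 1 + C t2 ^ 2 * X 2) ^ 3 := by
  simp only [stmt10cub, pow_add, map_add, map_mul, map_pow, map_ofNat]
  ring

lemma stmt10cub_map {R S : Type*} [CommRing R] [CommRing S] (f : R →+* S) (p : ℕ → R) (i : ℕ) :
    MvPolynomial.map f (stmt10cub p i) = stmt10cub (fun k => f (p k)) i := by
  simp only [stmt10cub, map_add, map_mul, map_pow, MvPolynomial.map_C, MvPolynomial.map_X,
    map_ofNat]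


-- power sums sequence
def stmt10p {F : Type*} [Field F] (b c d : F) : ℕ → F
  | 0 => 3
  | 1 => -b
  | 2 => b ^ 2 - 2 * c
  | (k+3) => -b * stmt10p b c d (k+2) - c * stmt10p b c d (k+1) - d * stmt10p b c d k

lemma stmt10psum {F Fb : Type*} [Field F] [Field Fb] (φ : F →+* Fb) (t0 t1 t2 : Fb)
    {b c d : F} (hb : φ b = -(t0 + t1 + t2)) (hc : φ c = t0*t1 + t0*t2 + t1*t2)
    (hd : φ d = -(t0*t1*t2)) :
    ∀ k, φ (stmt10p b c d k) = t0 ^ k + t1 ^ k + t2 ^ k := by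
  intro k
  induction k using Nat.strong_induction_on with
  | _ k ih =>
    match k with
    | 0 =>
      rw [stmt10p, map_ofNat]
      norm_num
    | 1 => simp [stmt10p, hb]
    | 2 =>
      simp only [stmt10p, map_sub, map_pow, map_mul, map_ofNat, hb, hc]
      ring
    | (k+3) =>
      have h0 := ih k (by omega)
      have h1 := ih (k+1) (by omega)
      have h2 := ih (k+2) (by omega)
      simp only [stmt10p, map_sub, map_mul, map_neg, hb, hc, hd, h0, h1, h2]
      ring

lemma stmt10quad {F Fb : Type*} [Field F] [Field Fb] [Algebra F Fb] {θ : Fb}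
    (hmin : (minpoly F θ).natDegree = 3) {a₀ a₁ a₂ : F}
    (h : ¬(a₀ = 0 ∧ a₁ = 0 ∧ a₂ = 0)) :
    algebraMap F Fb a₀ + algebraMap F Fb a₁ * θ + algebraMap F Fb a₂ * θ ^ 2 ≠ 0 := by
  intro heq
  set h2 : Polynomial F := Polynomial.C a₀ + Polynomial.C a₁ * Polynomial.X
      + Polynomial.C a₂ * Polynomial.X ^ 2 with hh2
  have hne : h2 ≠ 0 := by
    intro h0
    apply h
    refine ⟨?_, ?_, ?_⟩
    · have := congrArg (fun r => Polynomial.coeff r 0) h0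
      simpa [hh2] using this
    · have := congrArg (fun r => Polynomial.coeff r 1) h0
      simpa [hh2] using this
    · have := congrArg (fun r => Polynomial.coeff r 2) h0
      simpa [hh2] using this
  have hdvd : minpoly F θ ∣ h2 := by
    apply minpoly.dvd
    simp only [hh2, map_add, map_mul, map_pow, Polynomial.aeval_X, Polynomial.aeval_C]
    exact heq
  have hle := Polynomial.natDegree_le_of_dvd hdvd hne
  rw [hmin] at hle
  have : h2.natDegree ≤ 2 := by
    rw [hh2]
    compute_degree
  omega

-- derivative evaluation helper
lemma stmt10pd {Rb : Type*} [CommRing Rb] (A t : Rb) (u : Fin 3 → Rb) (k : Fin 3) :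
    eval u (pderiv k (C A * (X 0 + C t * X 1 + C t^2 * X 2)^3 : MvPolynomial (Fin 3) Rb)) =
      A * 3 * (u 0 + t * u 1 + t^2 * u 2)^2 * t ^ (k : ℕ) := by
  have hL : pderiv k ((X 0 + C t * X 1 + C t^2 * X 2 : MvPolynomial (Fin 3) Rb))
      = C (t ^ (k : ℕ)) := by
    fin_cases k <;>
      simp [pderiv_X_self, pderiv_X_of_ne (show (0:Fin 3) ≠ 1 by decide),
        pderiv_X_of_ne (show (0:Fin 3) ≠ 2 by decide),
        pderiv_X_of_ne (show (1:Fin 3) ≠ 0 by decide),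
        pderiv_X_of_ne (show (1:Fin 3) ≠ 2 by decide),
        pderiv_X_of_ne (show (2:Fin 3) ≠ 0 by decide),
        pderiv_X_of_ne (show (2:Fin 3) ≠ 1 by decide), pderiv_C_mul]
  rw [pderiv_C_mul, pderiv_pow, hL]
  simp only [eval_add, eval_mul, eval_pow, eval_C, eval_X, map_mul, map_pow, map_ofNat,
    Nat.cast_ofNat]
  ring


open MvPolynomial
open scoped Polynomial

theorem stmt_10 (F : Type*) [Field F] [Fintype F] (hchar : ringChar F ≠ 3) :
    ∃ F₀ F₁ F₂ : MvPolynomial (Fin 3) F,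
      F₀.IsHomogeneous 3 ∧ F₁.IsHomogeneous 3 ∧ F₂.IsHomogeneous 3 ∧
      LinearIndependent F ![F₀, F₁, F₂] ∧
      ∀ a : Fin 3 → F, a ≠ 0 →
        ∀ u : Fin 3 → AlgebraicClosure F, u ≠ 0 →
          MvPolynomial.eval u (MvPolynomial.map (algebraMap F (AlgebraicClosure F))
            (a 0 • F₀ + a 1 • F₁ + a 2 • F₂)) = 0 →
          ∃ i : Fin 3, MvPolynomial.eval u (MvPolynomial.pderiv i
            (MvPolynomial.map (algebraMap F (AlgebraicClosure F))
              (a 0 • F₀ + a 1 • F₁ + a 2 • F₂))) ≠ 0 := by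
  classical
  obtain ⟨g, hmonic, hirr, hdeg⟩ := exists_irred_cubic F
  set Fb := AlgebraicClosure F with hFb
  set φ := algebraMap F Fb with hφ
  -- 3 ≠ 0 in Fb
  have h3F : (3 : F) ≠ 0 := by
    intro h3
    have hc3 : ringChar F ∣ 3 := by
      rwa [← Nat.cast_ofNat (R := F), ringChar.spec F 3] at h3
    rcases (Nat.prime_three.eq_one_or_self_of_dvd _ hc3) with h | h
    · exact CharP.char_ne_one F (ringChar F) h
    · exact hchar h
  have h3Fb : (3 : Fb) ≠ 0 := by
    intro h3
    apply h3F
    have : φ 3 = φ 0 := by rw [map_ofNat, map_zero, h3]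
    exact (algebraMap F Fb).injective this
  -- roots
  have hsep : g.Separable := PerfectField.separable_of_irreducible hirr
  have hgne : g ≠ 0 := hmonic.ne_zero
  set gm := g.map φ with hgm
  have hsplit : gm.Splits :=
    IsAlgClosed.splits gm
  have hcard : Multiset.card gm.roots = 3 := by
    rw [Polynomial.splits_iff_card_roots.mp hsplit, hgm, Polynomial.natDegree_map, hdeg]
  have hnodup : gm.roots.Nodup := Polynomial.nodup_roots (hsep.map)
  obtain ⟨t0, t1, t2, hroots⟩ := Multiset.card_eq_three.mp hcard
  rw [hroots] at hnodup
  have hne01 : t0 ≠ t1 := by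
    intro h; rw [h] at hnodup; simp at hnodup
  have hne02 : t0 ≠ t2 := by
    intro h; rw [h] at hnodup; simp at hnodup
  have hne12 : t1 ≠ t2 := by
    intro h; rw [h] at hnodup; simp at hnodup
  have haev : ∀ t ∈ gm.roots, Polynomial.aeval t g = 0 := by
    intro t ht
    have h1 : gm.IsRoot t := Polynomial.isRoot_of_mem_roots ht
    rwa [Polynomial.IsRoot, hgm, Polynomial.eval_map, ← Polynomial.aeval_def] at h1
  have hmin3 : ∀ t ∈ gm.roots, (minpoly F t).natDegree = 3 := by
    intro t ht
    have heq := minpoly.eq_of_irreducible_of_monic hirr (haev t ht) hmonic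
    rw [← heq, hdeg]
  have ht0 : t0 ∈ gm.roots := by rw [hroots]; simp
  have ht1 : t1 ∈ gm.roots := by rw [hroots]; simp
  have ht2 : t2 ∈ gm.roots := by rw [hroots]; simp
  -- Vieta
  have hprod : gm = (Polynomial.X - Polynomial.C t0) * (Polynomial.X - Polynomial.C t1)
      * (Polynomial.X - Polynomial.C t2) := by
    have h1 := hsplit.eq_prod_roots_of_monic (hmonic.map φ)
    rw [hroots] at h1
    simpa [mul_assoc] using h1
  have hexp : gm = Polynomial.X ^ 3 - Polynomial.C (t0 + t1 + t2) * Polynomial.X ^ 2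
      + Polynomial.C (t0*t1 + t0*t2 + t1*t2) * Polynomial.X - Polynomial.C (t0*t1*t2) := by
    rw [hprod]
    simp only [Polynomial.C_add, Polynomial.C_mul]
    ring
  set b := g.coeff 2 with hbdef
  set c := g.coeff 1 with hcdef
  set d := g.coeff 0 with hddef
  have hb : φ b = -(t0 + t1 + t2) := by
    have : gm.coeff 2 = -(t0 + t1 + t2) := by
      rw [hexp]
      simp [add_mul, Polynomial.coeff_add, Polynomial.coeff_sub, Polynomial.coeff_C_mul, Polynomial.coeff_X_pow, Polynomial.coeff_C, Polynomial.coeff_X]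
    rwa [hgm, Polynomial.coeff_map] at this
  have hc : φ c = t0*t1 + t0*t2 + t1*t2 := by
    have : gm.coeff 1 = t0*t1 + t0*t2 + t1*t2 := by
      rw [hexp]
      simp [add_mul, Polynomial.coeff_add, Polynomial.coeff_sub, Polynomial.coeff_C_mul, Polynomial.coeff_X_pow, Polynomial.coeff_C, Polynomial.coeff_X]
    rwa [hgm, Polynomial.coeff_map] at this
  have hd : φ d = -(t0*t1*t2) := by
    have : gm.coeff 0 = -(t0*t1*t2) := by
      rw [hexp]
      simp [add_mul, Polynomial.coeff_add, Polynomial.coeff_sub, Polynomial.coeff_C_mul, Polynomial.coeff_X_pow, Polynomial.coeff_C, Polynomial.coeff_X]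
    rwa [hgm, Polynomial.coeff_map] at this
  have hP := stmt10psum φ t0 t1 t2 hb hc hd
  -- the three polynomials
  refine ⟨stmt10cub (stmt10p b c d) 0, stmt10cub (stmt10p b c d) 1, stmt10cub (stmt10p b c d) 2,
    stmt10cub_hom _ _, stmt10cub_hom _ _, stmt10cub_hom _ _, ?_, ?_⟩
  all_goals {
    have hmapc : ∀ i : ℕ, MvPolynomial.map φ (stmt10cub (stmt10p b c d) i) =
        C t0 ^ i * (X 0 + C t0 * X 1 + C t0 ^ 2 * X 2) ^ 3
        + C t1 ^ i * (X 0 + C t1 * X 1 + C t1 ^ 2 * X 2) ^ 3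
        + C t2 ^ i * (X 0 + C t2 * X 1 + C t2 ^ 2 * X 2) ^ 3 := by
      intro i
      rw [stmt10cub_map]
      rw [show (fun k => φ (stmt10p b c d k)) = fun k => t0 ^ k + t1 ^ k + t2 ^ k from
        funext hP]
      exact stmt10cub_eq t0 t1 t2 i
    first
    | -- linear independence
      (rw [Fintype.linearIndependent_iff]
       intro cv hsum
       have hctriv : cv 0 = 0 ∧ cv 1 = 0 ∧ cv 2 = 0 := by
         by_contra hcon
         rw [Fin.sum_univ_three] at hsum
         simp only [Matrix.cons_val_zero, Matrix.cons_val_one, Matrix.head_cons,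
           Matrix.cons_val_two, Matrix.tail_cons] at hsum
         have hmap0 := congrArg (MvPolynomial.map φ) hsum
         rw [map_add, map_add] at hmap0
         rw [smul_eq_C_mul, smul_eq_C_mul, smul_eq_C_mul] at hmap0
         rw [map_mul, map_mul, map_mul, MvPolynomial.map_C, MvPolynomial.map_C,
           MvPolynomial.map_C, hmapc 0, hmapc 1, hmapc 2, map_zero] at hmap0
         set w : Fin 3 → Fb := ![t1*t2, -(t1+t2), 1] with hw
         have heval := congrArg (eval w) hmap0
         simp only [map_add, map_mul, map_pow, eval_C, eval_X, eval_add, eval_mul, eval_pow,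
           map_zero, eval_zero] at heval
         simp only [hw, Matrix.cons_val_zero, Matrix.cons_val_one, Matrix.head_cons,
           Matrix.cons_val_two, Matrix.tail_cons] at heval
         have hA0 : (φ (cv 0) + φ (cv 1) * t0 + φ (cv 2) * t0 ^ 2)
             * ((t0 - t1) * (t0 - t2)) ^ 3 = 0 := by
           linear_combination heval
         have hA0' : φ (cv 0) + φ (cv 1) * t0 + φ (cv 2) * t0 ^ 2 = 0 := by
           have hD : ((t0 - t1) * (t0 - t2)) ^ 3 ≠ 0 :=
             pow_ne_zero _ (mul_ne_zero (sub_ne_zero.mpr hne01) (sub_ne_zero.mpr hne02))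
           exact (mul_eq_zero.mp hA0).resolve_right hD
         exact stmt10quad (hmin3 t0 ht0) hcon hA0'
       intro i
       fin_cases i
       · exact hctriv.1
       · exact hctriv.2.1
       · exact hctriv.2.2)
    | -- smoothness
      (intro a ha u hu _
       by_contra hcon
       push_neg at hcon
       have hfbar : MvPolynomial.map φ (a 0 • stmt10cub (stmt10p b c d) 0
           + a 1 • stmt10cub (stmt10p b c d) 1 + a 2 • stmt10cub (stmt10p b c d) 2) =
           C (φ (a 0) + φ (a 1) * t0 + φ (a 2) * t0 ^ 2)
             * (X 0 + C t0 * X 1 + C t0 ^ 2 * X 2) ^ 3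
           + C (φ (a 0) + φ (a 1) * t1 + φ (a 2) * t1 ^ 2)
             * (X 0 + C t1 * X 1 + C t1 ^ 2 * X 2) ^ 3
           + C (φ (a 0) + φ (a 1) * t2 + φ (a 2) * t2 ^ 2)
             * (X 0 + C t2 * X 1 + C t2 ^ 2 * X 2) ^ 3 := by
         rw [map_add, map_add, smul_eq_C_mul, smul_eq_C_mul, smul_eq_C_mul,
           map_mul, map_mul, map_mul, MvPolynomial.map_C, MvPolynomial.map_C,
           MvPolynomial.map_C, hmapc 0, hmapc 1, hmapc 2]
         simp only [map_add, map_mul, map_pow]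
         ring
       set A0 := φ (a 0) + φ (a 1) * t0 + φ (a 2) * t0 ^ 2 with hA0def
       set A1 := φ (a 0) + φ (a 1) * t1 + φ (a 2) * t1 ^ 2 with hA1def
       set A2 := φ (a 0) + φ (a 1) * t2 + φ (a 2) * t2 ^ 2 with hA2def
       set L0 := u 0 + t0 * u 1 + t0 ^ 2 * u 2 with hL0def
       set L1 := u 0 + t1 * u 1 + t1 ^ 2 * u 2 with hL1def
       set L2 := u 0 + t2 * u 1 + t2 ^ 2 * u 2 with hL2def
       have hk : ∀ k : Fin 3, A0 * 3 * L0 ^ 2 * t0 ^ (k:ℕ) + A1 * 3 * L1 ^ 2 * t1 ^ (k:ℕ)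
           + A2 * 3 * L2 ^ 2 * t2 ^ (k:ℕ) = 0 := by
         intro k
         have h1 := hcon k
         rw [hfbar, map_add, map_add, map_add, map_add] at h1
         rw [stmt10pd, stmt10pd, stmt10pd] at h1
         exact h1
       have hk0 := hk 0
       have hk1 := hk 1
       have hk2 := hk 2
       norm_num at hk0 hk1 hk2
       have notall : ¬(a 0 = 0 ∧ a 1 = 0 ∧ a 2 = 0) := by
         rintro ⟨h0, h1, h2⟩
         apply ha
         funext i
         fin_cases i <;> simp [h0, h1, h2]
       have hA0ne : A0 ≠ 0 := stmt10quad (hmin3 t0 ht0) notall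
       have hA1ne : A1 ≠ 0 := stmt10quad (hmin3 t1 ht1) notall
       have hA2ne : A2 ≠ 0 := stmt10quad (hmin3 t2 ht2) notall
       -- solve Vandermonde for w_j := A_j * L_j ^ 2
       have hw0 : A0 * 3 * L0 ^ 2 * ((t0 - t1) * (t0 - t2)) = 0 := by
         linear_combination (t1*t2) * hk0 - (t1+t2) * hk1 + hk2
       have hw1 : A1 * 3 * L1 ^ 2 * ((t1 - t0) * (t1 - t2)) = 0 := by
         linear_combination (t0*t2) * hk0 - (t0+t2) * hk1 + hk2
       have hw2 : A2 * 3 * L2 ^ 2 * ((t2 - t0) * (t2 - t1)) = 0 := by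
         linear_combination (t0*t1) * hk0 - (t0+t1) * hk1 + hk2
       have solveL : ∀ (Aj Lj x y : Fb), Aj ≠ 0 → x ≠ 0 → y ≠ 0 →
           Aj * 3 * Lj ^ 2 * (x * y) = 0 → Lj = 0 := by
         intro Aj Lj x y hA hx hy h
         rcases mul_eq_zero.mp h with h | h
         · rcases mul_eq_zero.mp h with h | h
           · rcases mul_eq_zero.mp h with h | h
             · exact absurd h hA
             · exact absurd h h3Fb
           · exact (pow_eq_zero_iff (two_ne_zero)).mp h
         · rcases mul_eq_zero.mp h with h | h
           · exact absurd h hx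
           · exact absurd h hy
       have e0 : u 0 + t0 * u 1 + t0 ^ 2 * u 2 = 0 := by
         rw [← hL0def]
         exact solveL A0 L0 _ _ hA0ne (sub_ne_zero.mpr hne01) (sub_ne_zero.mpr hne02) hw0
       have e1 : u 0 + t1 * u 1 + t1 ^ 2 * u 2 = 0 := by
         rw [← hL1def]
         exact solveL A1 L1 _ _ hA1ne (sub_ne_zero.mpr hne01.symm) (sub_ne_zero.mpr hne12) hw1
       have e2 : u 0 + t2 * u 1 + t2 ^ 2 * u 2 = 0 := by
         rw [← hL2def]
         exact solveL A2 L2 _ _ hA2ne (sub_ne_zero.mpr hne02.symm) (sub_ne_zero.mpr hne12.symm) hw2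
       have g01 : u 1 + (t0 + t1) * u 2 = 0 := by
         have h := sub_ne_zero.mpr hne01
         have hh : (t0 - t1) * (u 1 + (t0 + t1) * u 2) = 0 := by linear_combination e0 - e1
         exact (mul_eq_zero.mp hh).resolve_left h
       have g02 : u 1 + (t0 + t2) * u 2 = 0 := by
         have h := sub_ne_zero.mpr hne02
         have hh : (t0 - t2) * (u 1 + (t0 + t2) * u 2) = 0 := by linear_combination e0 - e2
         exact (mul_eq_zero.mp hh).resolve_left h
       have hu2 : u 2 = 0 := by
         have h := sub_ne_zero.mpr hne12
         have hh : (t1 - t2) * u 2 = 0 := by linear_combination g01 - g02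
         exact (mul_eq_zero.mp hh).resolve_left h
       have hu1 : u 1 = 0 := by
         have := g01
         rw [hu2] at this
         simpa using this
       have hu0 : u 0 = 0 := by
         have := e0
         rw [hu2, hu1] at this
         simpa using this
       apply hu
       funext i
       fin_cases i <;> simp [hu0, hu1, hu2])
  }

end AuxB
end

section
/- Let F be a finite field whose characteristic is not 3, and let F₀, F₁, F₂, F₃ ∈ MvPolynomial (Fin 3) F be homogeneous polynomials of degree 3 that are linearly independent over F. Then there exists a nonzero tuple (a₀,a₁,a₂,a₃) ∈ F⁴ such that the plane cubic f = a₀•F₀ + a₁•F₁ + a₂•F₂ + a₃•F₃ has a singular point: there exists (u₀,u₁,u₂) ∈ (AlgebraicClosure F)³ with (u₀,u₁,u₂) ≠ (0,0,0) at which the image f̄ of f in MvPolynomial (Fin 3) (AlgebraicClosure F) evaluates to 0 and all three partial derivatives MvPolynomial.pderiv i f̄ (i = 0,1,2) evaluate to 0. -/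
open MvPolynomial

lemma euler_id {R : Type*} [CommRing R] {σ : Type*} [Fintype σ] [DecidableEq σ] {n : ℕ}
    {f : MvPolynomial σ R} (hf : f.IsHomogeneous n) :
    ∑ i, X i * pderiv i f = n • f := by
  conv_lhs => rw [f.as_sum]
  conv_rhs => rw [f.as_sum]
  simp only [map_sum, Finset.mul_sum, Finset.smul_sum]
  rw [Finset.sum_comm]
  refine Finset.sum_congr rfl fun d hd => ?_
  have hdeg : ∑ i, d i = n := by
    have h1 : (Finsupp.weight (1 : σ → ℕ)) d = n := hf (mem_support_iff.mp hd)
    rw [← h1]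
    simp [Finsupp.weight_apply, Finsupp.sum_fintype]
  calc ∑ i, X i * pderiv i (monomial d (coeff d f))
      = ∑ i, monomial d (coeff d f * d i) := by
        refine Finset.sum_congr rfl fun i _ => ?_
        rw [pderiv_monomial]
        rcases Nat.eq_zero_or_pos (d i) with h | h
        · simp [h]
        · rw [X, monomial_mul, one_mul]
          congr 1
          rw [add_comm, tsub_add_cancel_of_le]
          exact Finsupp.single_le_iff.mpr h
    _ = n • monomial d (coeff d f) := by
        rw [← map_sum, ← Finset.mul_sum, ← Nat.cast_sum, hdeg, smul_monomial, nsmul_eq_mul,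
          mul_comm]

theorem stmt_11 (F : Type*) [Field F] [Fintype F] (hchar : ringChar F ≠ 3)
    (F₀ F₁ F₂ F₃ : MvPolynomial (Fin 3) F)
    (h₀ : F₀.IsHomogeneous 3) (h₁ : F₁.IsHomogeneous 3)
    (h₂ : F₂.IsHomogeneous 3) (h₃ : F₃.IsHomogeneous 3)
    (hli : LinearIndependent F ![F₀, F₁, F₂, F₃]) :
    ∃ a : Fin 4 → F, a ≠ 0 ∧
      ∃ u : Fin 3 → AlgebraicClosure F, u ≠ 0 ∧
        MvPolynomial.eval u (MvPolynomial.map (algebraMap F (AlgebraicClosure F))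
          (a 0 • F₀ + a 1 • F₁ + a 2 • F₂ + a 3 • F₃)) = 0 ∧
        ∀ i : Fin 3, MvPolynomial.eval u (MvPolynomial.pderiv i
          (MvPolynomial.map (algebraMap F (AlgebraicClosure F))
            (a 0 • F₀ + a 1 • F₁ + a 2 • F₂ + a 3 • F₃))) = 0 := by
  classical
  set K := AlgebraicClosure F with hK
  set φ := algebraMap F K with hφ
  set v : Fin 3 → F := fun i => if i = 0 then 1 else 0 with hv
  let Lg : (Fin 4 → F) →ₗ[F] MvPolynomial (Fin 3) F :=
    (LinearMap.proj 0).smulRight F₀ + (LinearMap.proj 1).smulRight F₁ +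
      (LinearMap.proj 2).smulRight F₂ + (LinearMap.proj 3).smulRight F₃
  have hLg : ∀ a : Fin 4 → F, Lg a = a 0 • F₀ + a 1 • F₁ + a 2 • F₂ + a 3 • F₃ := by
    intro a
    simp [Lg, LinearMap.add_apply, LinearMap.smulRight_apply, LinearMap.proj_apply]
  let L : (Fin 4 → F) →ₗ[F] (Fin 3 → F) :=
    LinearMap.pi fun i => ((aeval v).toLinearMap.comp (pderiv i).toLinearMap).comp Lg
  have haev : ∀ p : MvPolynomial (Fin 3) F, aeval v p = eval v p := fun p => by
    rw [← coe_aeval_eq_eval]; rfl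
  have hLapp : ∀ (a : Fin 4 → F) (i : Fin 3), L a i = eval v (pderiv i (Lg a)) :=
    fun a i => haev _
  -- L is not injective since 4 > 3
  have hninj : ¬ Function.Injective L := by
    intro hinj
    have := LinearMap.finrank_le_finrank_of_injective hinj
    simp [Module.finrank_pi] at this
  rw [← LinearMap.ker_eq_bot] at hninj
  obtain ⟨a, haker, ha0⟩ := (Submodule.ne_bot_iff _).mp hninj
  have haL : L a = 0 := LinearMap.mem_ker.mp haker
  have hker : ∀ i, eval v (pderiv i (a 0 • F₀ + a 1 • F₁ + a 2 • F₂ + a 3 • F₃)) = 0 := by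
    intro i
    have h := congrFun haL i
    rw [hLapp a i, hLg a] at h
    exact h
  have key : ∀ g : MvPolynomial (Fin 3) F,
      eval (fun i => φ (v i)) (map φ g) = φ (eval v g) := by
    intro g
    rw [eval_map]
    have h := eval₂_comp_left φ (RingHom.id F) v g
    simp only [RingHom.comp_id] at h
    exact h.symm
  have hpart : ∀ i, eval (fun i => φ (v i))
      (pderiv i (map φ (a 0 • F₀ + a 1 • F₁ + a 2 • F₂ + a 3 • F₃))) = 0 := by
    intro i
    rw [pderiv_map, key, hker i, map_zero]
  have hfh : (a 0 • F₀ + a 1 • F₁ + a 2 • F₂ + a 3 • F₃).IsHomogeneous 3 := by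
    have m₀ : F₀ ∈ homogeneousSubmodule (Fin 3) F 3 := h₀
    have m₁ : F₁ ∈ homogeneousSubmodule (Fin 3) F 3 := h₁
    have m₂ : F₂ ∈ homogeneousSubmodule (Fin 3) F 3 := h₂
    have m₃ : F₃ ∈ homogeneousSubmodule (Fin 3) F 3 := h₃
    exact Submodule.add_mem _ (Submodule.add_mem _ (Submodule.add_mem _
      (Submodule.smul_mem _ _ m₀) (Submodule.smul_mem _ _ m₁))
      (Submodule.smul_mem _ _ m₂)) (Submodule.smul_mem _ _ m₃)
  have h3K : (3 : K) ≠ 0 := by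
    have h3F : (3 : F) ≠ 0 := by
      intro h
      have hdvd : ringChar F ∣ 3 := ringChar.dvd (by exact_mod_cast h)
      rcases (Nat.prime_three.eq_one_or_self_of_dvd _ hdvd) with h1 | h1
      · exact CharP.ringChar_ne_one h1
      · exact hchar h1
    intro h
    apply h3F
    apply RingHom.injective φ
    rw [map_ofNat, map_zero]
    exact h
  refine ⟨a, ha0, fun i => φ (v i), ?_, ?_, hpart⟩
  · intro h
    have := congrFun h 0
    simp [hv] at this
  · have heu := congrArg (eval (fun i => φ (v i)))
      (euler_id (hfh.map φ))
    simp only [map_sum, map_mul, eval_X] at heu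
    rw [Finset.sum_eq_zero (fun i _ => by rw [hpart i, mul_zero])] at heu
    have h2 : ((3:ℕ) : K) * eval (fun i => φ (v i))
        (map φ (a 0 • F₀ + a 1 • F₁ + a 2 • F₂ + a 3 • F₃)) = 0 := by
      rw [← nsmul_eq_mul]
      simpa using heu.symm
    have := mul_eq_zero.mp h2
    rcases this with h | h
    · exact absurd (by exact_mod_cast h) h3K
    · exact h
end

section
/- Let F be a finite field and let F₀, F₁, F₂, F₃, F₄ ∈ MvPolynomial (Fin 3) F be homogeneous polynomials of degree 3 that are linearly independent over F. Then there exists a nonzero tuple (a₀,a₁,a₂,a₃,a₄) ∈ F⁵ such that the (nonzero) polynomial a₀•F₀ + a₁•F₁ + a₂•F₂ + a₃•F₃ + a₄•F₄ is not irreducible in MvPolynomial (Fin 3) F. -/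
open MvPolynomial

theorem stmt_13 (F : Type*) [Field F] [Fintype F]
    (F₀ F₁ F₂ F₃ F₄ : MvPolynomial (Fin 3) F)
    (h₀ : F₀.IsHomogeneous 3) (h₁ : F₁.IsHomogeneous 3) (h₂ : F₂.IsHomogeneous 3)
    (h₃ : F₃.IsHomogeneous 3) (h₄ : F₄.IsHomogeneous 3)
    (hli : LinearIndependent F ![F₀, F₁, F₂, F₃, F₄]) :
    ∃ a : Fin 5 → F, a ≠ 0 ∧
      ¬ Irreducible (a 0 • F₀ + a 1 • F₁ + a 2 • F₂ + a 3 • F₃ + a 4 • F₄) := by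
  classical
  set G : Fin 5 → MvPolynomial (Fin 3) F := ![F₀, F₁, F₂, F₃, F₄] with hG
  set M : Fin 4 → (Fin 3 →₀ ℕ) := ![Finsupp.single 0 3,
    Finsupp.single 0 2 + Finsupp.single 1 1,
    Finsupp.single 0 1 + Finsupp.single 1 2, Finsupp.single 1 3] with hMdef
  set v : Fin 5 → (Fin 4 → F) := fun i j => coeff (M j) (G i) with hv
  have hdep : ¬ LinearIndependent F v := by
    intro h
    have hcard := h.fintype_card_le_finrank
    simp [Module.finrank_fintype_fun_eq_card] at hcard
  rw [Fintype.not_linearIndependent_iff] at hdep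
  obtain ⟨a, hsum, i, hi⟩ := hdep
  refine ⟨a, fun h => hi (congrFun h i), ?_⟩
  set C : MvPolynomial (Fin 3) F :=
    a 0 • F₀ + a 1 • F₁ + a 2 • F₂ + a 3 • F₃ + a 4 • F₄ with hC
  have hCsum : C = ∑ k : Fin 5, a k • G k := by
    rw [hC, Fin.sum_univ_five]
    simp [hG]
  have hCne : C ≠ 0 := by
    intro h
    rw [hCsum] at h
    exact hi (Fintype.linearIndependent_iff.mp hli a h i)
  have hsm : ∀ (c : F) (p : MvPolynomial (Fin 3) F), p.IsHomogeneous 3 →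
      (c • p).IsHomogeneous 3 := fun c p hp => by
    rw [smul_eq_C_mul]; exact hp.C_mul c
  have hChom : C.IsHomogeneous 3 :=
    ((((hsm _ _ h₀).add (hsm _ _ h₁)).add (hsm _ _ h₂)).add (hsm _ _ h₃)).add (hsm _ _ h₄)
  -- the four coefficients of C at z-free monomials vanish
  have hcoeff : ∀ j : Fin 4, coeff (M j) C = 0 := by
    intro j
    have := congrFun hsum j
    simp only [Finset.sum_apply, Pi.smul_apply, Pi.zero_apply, hv, smul_eq_mul] at this
    rw [hCsum, coeff_sum]
    simpa [coeff_smul] using this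
  -- every monomial in the support of C involves z
  have hsupp : ∀ d ∈ C.support, d 2 ≠ 0 := by
    intro d hd hz
    have hcd : coeff d C ≠ 0 := mem_support_iff.mp hd
    have hdeg : d 0 + d 1 + d 2 = 3 := by
      have h1 := hChom hcd
      rw [Finsupp.weight_apply] at h1
      simpa [Finsupp.sum_fintype, Fin.sum_univ_three] using h1
    have hM0 : M 0 = Finsupp.single 0 3 := by simp [hMdef]
    have hM1 : M 1 = Finsupp.single 0 2 + Finsupp.single 1 1 := by simp [hMdef]
    have hM2 : M 2 = Finsupp.single 0 1 + Finsupp.single 1 2 := by simp [hMdef]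
    have hM3 : M 3 = Finsupp.single 1 3 := by simp [hMdef]
    -- d = M j for some j
    have hdM : ∃ j : Fin 4, d = M j := by
      have h0 : d 0 ≤ 3 := by omega
      interval_cases h : d 0
      · exact ⟨3, by rw [hM3]; ext k; fin_cases k <;>
          simp [Finsupp.single_apply] <;> omega⟩
      · exact ⟨2, by rw [hM2]; ext k; fin_cases k <;>
          simp [Finsupp.single_apply] <;> omega⟩
      · exact ⟨1, by rw [hM1]; ext k; fin_cases k <;>
          simp [Finsupp.single_apply] <;> omega⟩
      · exact ⟨0, by rw [hM0]; ext k; fin_cases k <;>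
          simp [Finsupp.single_apply] <;> omega⟩
    obtain ⟨j, rfl⟩ := hdM
    exact hcd (hcoeff j)
  -- hence X 2 divides C
  have hdvd : (X 2 : MvPolynomial (Fin 3) F) ∣ C := by
    conv_rhs => rw [C.as_sum]
    refine Finset.dvd_sum ?_
    intro d hd
    rw [X_dvd_monomial]
    exact Or.inr (hsupp d hd)
  obtain ⟨Q, hQ⟩ := hdvd
  intro hirr
  rcases hirr.isUnit_or_isUnit hQ with hu | hu
  · -- X 2 is not a unit: evaluate everything at 0
    have := hu.map (eval (0 : Fin 3 → F))
    simp [isUnit_iff_ne_zero] at this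
  · -- Q is a unit, so its constant coefficient is nonzero, contradicting
    -- homogeneity of C in degree 3 (coefficient at the monomial z would be nonzero)
    have hconst : constantCoeff Q ≠ 0 := by
      intro h
      have := hu.map (constantCoeff (σ := Fin 3) (R := F))
      rw [h] at this
      simp [isUnit_iff_ne_zero] at this
    have hcz : coeff (Finsupp.single 2 1) C = constantCoeff Q := by
      rw [hQ]
      have : (Finsupp.single (2 : Fin 3) 1 : Fin 3 →₀ ℕ)
          = Finsupp.single 2 1 + 0 := by simp
      rw [this, coeff_X_mul]
      rfl
    have hbad : coeff (Finsupp.single 2 1) C ≠ 0 := by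
      rw [hcz]; exact hconst
    have := hChom hbad
    rw [Finsupp.weight_apply] at this
    simp [Finsupp.sum_fintype, Fin.sum_univ_three, Finsupp.single_apply] at this
end
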